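/- arXiv:math/0501112 — 3 statements merged into one kernel-verified Lean document; each statement's English description precedes it below -/
import Mathlib

section
/- Let π be a set partition of a finite set contributing to the Leonov–Shiryaev formula, i.e., a partition π of {1,...,N} where {1,...,N} is divided into n consecutive intervals ρ_1,...,ρ_n, and suppose π ∨ {ρ_1,...,ρ_n} is the partition with a single block. Then Σ_i (|π_i| - 1) ≥ n - 1, where π_1,...,π_m are the blocks of π. -/
open Finset

private lemma key_card {N : ℕ} (k : ℕ) : ∀ (ρ π : Finpartition (univ : Finset (Fin N))),
    ρ.parts.card ≤ k →
    (∀ σ : Finpartition (univ : Finset (Fin N)), π ≤ σ → ρ ≤ σ → σ = ⊤) →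
    π.parts.card + ρ.parts.card ≤ N + 1 := by
  induction k with
  | zero =>
    intro ρ π hk _
    have h0 : ρ.parts = ∅ := card_eq_zero.1 (Nat.le_zero.1 hk)
    have huniv : (univ : Finset (Fin N)) = ∅ := by
      have := ρ.sup_parts; rw [h0] at this; simpa using this.symm
    have hm : π.parts.card ≤ N := by
      have := π.card_parts_le_card
      simpa using this
    omega
  | succ k ih =>
    intro ρ π hk hjoin
    by_cases hsplit : ∃ B ∈ π.parts, ∃ R1 ∈ ρ.parts, ∃ R2 ∈ ρ.parts,
        R1 ≠ R2 ∧ (B ∩ R1).Nonempty ∧ (B ∩ R2).Nonempty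
    · obtain ⟨B, hB, R1, hR1, R2, hR2, hne, ⟨x1, hx1⟩, ⟨x2, hx2⟩⟩ := hsplit
      rw [mem_inter] at hx1 hx2
      have hd12 : Disjoint R1 R2 := ρ.disjoint hR1 hR2 hne
      have hx2R1 : x2 ∉ R1 := disjoint_right.1 hd12 hx2.2
      -- the new ρ : merge R1 and R2
      set E : Finset (Finset (Fin N)) := (ρ.parts.erase R1).erase R2 with hE
      have hR2mem : R2 ∈ ρ.parts.erase R1 := mem_erase.2 ⟨hne.symm, hR2⟩
      have hEd : ∀ C ∈ E, C ≠ R1 ∧ C ≠ R2 ∧ C ∈ ρ.parts := by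
        intro C hC
        rw [hE, mem_erase, mem_erase] at hC
        exact ⟨hC.2.1, hC.1, hC.2.2⟩
      have hinsE : insert R1 (insert R2 E) = ρ.parts := by
        rw [hE, insert_erase hR2mem, insert_erase hR1]
      have hUnotE : R1 ∪ R2 ∉ E := by
        intro hmem
        obtain ⟨h1, _, hP⟩ := hEd _ hmem
        exact h1 (ρ.eq_of_mem_parts hP hR1 (mem_union_left _ hx1.2) hx1.2)
      have hρ'supIndep : (insert (R1 ∪ R2) E).SupIndep id := by
        rw [supIndep_iff_pairwiseDisjoint]
        intro a ha b hb hab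
        simp only [coe_insert, Set.mem_insert_iff, mem_coe] at ha hb
        have hdisj : ∀ C ∈ E, Disjoint (R1 ∪ R2) C := by
          intro C hC
          obtain ⟨h1, h2, hP⟩ := hEd _ hC
          exact disjoint_union_left.2 ⟨ρ.disjoint hR1 hP (Ne.symm h1), ρ.disjoint hR2 hP (Ne.symm h2)⟩
        rcases ha with rfl | ha <;> rcases hb with rfl | hb
        · exact absurd rfl hab
        · exact hdisj _ hb
        · exact (hdisj _ ha).symm
        · exact ρ.disjoint (hEd _ ha).2.2 (hEd _ hb).2.2 hab
      have hρ'sup : (insert (R1 ∪ R2) E).sup id = (univ : Finset (Fin N)) := by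
        rw [← ρ.sup_parts, ← hinsE, sup_insert, sup_insert, sup_insert]
        simp only [id]
        rw [← sup_eq_union, sup_assoc]
      have hρ'bot : ⊥ ∉ insert (R1 ∪ R2) E := by
        intro hmem
        rcases mem_insert.1 hmem with h | h
        · have hxm : x1 ∈ R1 ∪ R2 := mem_union_left _ hx1.2
          rw [← h] at hxm
          simp at hxm
        · exact ρ.bot_notMem (hEd _ h).2.2
      set ρ' : Finpartition (univ : Finset (Fin N)) := ⟨insert (R1 ∪ R2) E, hρ'supIndep, hρ'sup, hρ'bot⟩
        with hρ'
      -- the new π : split B into B ∩ R1 and B \ R1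
      set F : Finset (Finset (Fin N)) := π.parts.erase B with hF
      have hFd : ∀ C ∈ F, C ≠ B ∧ C ∈ π.parts := fun C hC => ⟨(mem_erase.1 hC).1, (mem_erase.1 hC).2⟩
      have hx2B : x2 ∈ B \ R1 := mem_sdiff.2 ⟨hx2.1, hx2R1⟩
      have hx1B : x1 ∈ B ∩ R1 := mem_inter.2 hx1
      have hInotF : ∀ S, x1 ∈ S ∨ x2 ∈ S → S ⊆ B → S ∉ F := by
        intro S hxS hSB hmem
        obtain ⟨h1, hP⟩ := hFd _ hmem
        rcases hxS with hx | hx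
        · exact h1 (π.eq_of_mem_parts hP hB hx (hSB hx))
        · exact h1 (π.eq_of_mem_parts hP hB hx (hSB hx))
      have hIne : B ∩ R1 ≠ B \ R1 := by
        intro h
        rw [h] at hx1B
        exact (mem_sdiff.1 hx1B).2 hx1.2
      have hπ'supIndep : (insert (B ∩ R1) (insert (B \ R1) F)).SupIndep id := by
        rw [supIndep_iff_pairwiseDisjoint]
        intro a ha b hb hab
        simp only [coe_insert, Set.mem_insert_iff, mem_coe] at ha hb
        have hdisjF : ∀ S, S ⊆ B → ∀ C ∈ F, Disjoint S C := by
          intro S hSB C hC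
          exact (π.disjoint hB (hFd _ hC).2 (Ne.symm (hFd _ hC).1)).mono_left hSB
        have hd' : Disjoint (B ∩ R1) (B \ R1) :=
          (sdiff_disjoint.mono_right inter_subset_right).symm
        rcases ha with rfl | rfl | ha <;> rcases hb with rfl | rfl | hb
        · exact absurd rfl hab
        · exact hd'
        · exact hdisjF _ inter_subset_left _ hb
        · exact hd'.symm
        · exact absurd rfl hab
        · exact hdisjF _ sdiff_subset _ hb
        · exact (hdisjF _ inter_subset_left _ ha).symm
        · exact (hdisjF _ sdiff_subset _ ha).symm
        · exact π.disjoint (hFd _ ha).2 (hFd _ hb).2 hab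
      have hπ'sup : (insert (B ∩ R1) (insert (B \ R1) F)).sup id = (univ : Finset (Fin N)) := by
        rw [← π.sup_parts, ← insert_erase hB, ← hF, sup_insert, sup_insert, sup_insert]
        simp only [id]
        rw [← sup_assoc]
        congr 1
        rw [sup_eq_union]
        ext y
        simp only [mem_union, mem_inter, mem_sdiff]
        tauto
      have hπ'bot : ⊥ ∉ insert (B ∩ R1) (insert (B \ R1) F) := by
        intro hmem
        rcases mem_insert.1 hmem with h | h
        · rw [← h] at hx1B
          simp at hx1B
        · rcases mem_insert.1 h with h | h
          · rw [← h] at hx2B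
            simp at hx2B
          · exact π.bot_notMem (hFd _ h).2
      set π' : Finpartition (univ : Finset (Fin N)) :=
        ⟨insert (B ∩ R1) (insert (B \ R1) F), hπ'supIndep, hπ'sup, hπ'bot⟩ with hπ'
      -- the join hypothesis for π' ρ'
      have hjoin' : ∀ σ : Finpartition (univ : Finset (Fin N)), π' ≤ σ → ρ' ≤ σ → σ = ⊤ := by
        intro σ hπσ hρσ
        obtain ⟨D3, hD3, hRD3⟩ := hρσ (mem_insert_self (R1 ∪ R2) E)
        apply hjoin σ
        · intro A hA
          by_cases hAB : A = B
          · subst hAB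
            obtain ⟨D1, hD1, h1⟩ := hπσ (mem_insert_self _ _)
            obtain ⟨D2, hD2, h2⟩ := hπσ (mem_insert_of_mem (mem_insert_self _ _))
            have e1 : D1 = D3 :=
              σ.eq_of_mem_parts hD1 hD3 (h1 hx1B) (hRD3 (mem_union_left _ hx1.2))
            have e2 : D2 = D3 :=
              σ.eq_of_mem_parts hD2 hD3 (h2 hx2B) (hRD3 (mem_union_right _ hx2.2))
            refine ⟨D3, hD3, ?_⟩
            intro y hy
            by_cases hyR : y ∈ R1
            · exact e1 ▸ h1 (mem_inter.2 ⟨hy, hyR⟩)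
            · exact e2 ▸ h2 (mem_sdiff.2 ⟨hy, hyR⟩)
          · exact hπσ (mem_insert_of_mem (mem_insert_of_mem (mem_erase.2 ⟨hAB, hA⟩)))
        · intro C hC
          by_cases h1 : C = R1
          · exact ⟨D3, hD3, h1 ▸ (subset_union_left.trans hRD3)⟩
          by_cases h2 : C = R2
          · exact ⟨D3, hD3, h2 ▸ (subset_union_right.trans hRD3)⟩
          · exact hρσ (mem_insert_of_mem (mem_erase.2 ⟨h2, mem_erase.2 ⟨h1, hC⟩⟩))
      -- cardinalities
      have hρ'card : ρ'.parts.card + 1 = ρ.parts.card := by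
        show (insert (R1 ∪ R2) E).card + 1 = ρ.parts.card
        rw [card_insert_of_notMem hUnotE, hE, card_erase_of_mem hR2mem,
          card_erase_of_mem hR1]
        have : 2 ≤ ρ.parts.card := one_lt_card.2 ⟨R1, hR1, R2, hR2, hne⟩
        omega
      have hπ'card : π'.parts.card = π.parts.card + 1 := by
        show (insert (B ∩ R1) (insert (B \ R1) F)).card = π.parts.card + 1
        rw [card_insert_of_notMem, card_insert_of_notMem
          (hInotF _ (Or.inr hx2B) sdiff_subset), hF, card_erase_of_mem hB]
        · have : 1 ≤ π.parts.card := card_pos.2 ⟨B, hB⟩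
          omega
        · intro hmem
          rcases mem_insert.1 hmem with h | h
          · exact hIne h
          · exact hInotF _ (Or.inl hx1B) inter_subset_left h
      have := ih ρ' π' (by omega) hjoin'
      omega
    · -- no π-block meets two distinct ρ-blocks, hence π ≤ ρ
      have hπρ : π ≤ ρ := by
        intro A hA
        obtain ⟨x, hx⟩ := π.nonempty_of_mem_parts hA
        obtain ⟨R, hR, hxR⟩ := ρ.exists_mem (mem_univ x)
        refine ⟨R, hR, fun y hy => ?_⟩
        obtain ⟨R', hR', hyR'⟩ := ρ.exists_mem (mem_univ y)
        by_cases hRR : R = R'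
        · exact hRR ▸ hyR'
        · exact absurd ⟨A, hA, R, hR, R', hR', hRR,
            ⟨x, mem_inter.2 ⟨hx, hxR⟩⟩, ⟨y, mem_inter.2 ⟨hy, hyR'⟩⟩⟩ hsplit
      have hρtop : ρ = ⊤ := hjoin ρ hπρ le_rfl
      have hρ1 : ρ.parts.card ≤ 1 := by
        calc ρ.parts.card ≤ ({univ} : Finset (Finset (Fin N))).card :=
              card_le_card (hρtop ▸ Finpartition.parts_top_subset _)
          _ = 1 := card_singleton _
      have hm : π.parts.card ≤ N := by
        have := π.card_parts_le_card
        simpa using this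
      omega

/-- let `{0,…,N-1}` be divided into `n` consecutive intervals
`ρ_s = {j : c s ≤ j < c (s+1)}` (the blocks of the partition `ρ`), and let `π` be a set
partition of `{0,…,N-1}` contributing to the Leonov–Shiryaev formula, i.e. the join
`π ∨ ρ` is the partition with a single block (equivalently: every common upper bound
of `π` and `ρ` is `⊤`). Then `∑_i (|π_i| - 1) ≥ n - 1`. -/
theorem leonov_shiryaev_partition_bound {N n : ℕ}
    (c : Fin (n + 1) → ℕ) (hc : StrictMono c) (hc0 : c 0 = 0) (hcN : c (Fin.last n) = N)
    (ρ : Finpartition (Finset.univ : Finset (Fin N)))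
    (hρ : ρ.parts = Finset.image
      (fun s : Fin n => Finset.univ.filter
        (fun j : Fin N => c s.castSucc ≤ (j : ℕ) ∧ (j : ℕ) < c s.succ)) Finset.univ)
    (π : Finpartition (Finset.univ : Finset (Fin N)))
    (hjoin : ∀ σ : Finpartition (Finset.univ : Finset (Fin N)), π ≤ σ → ρ ≤ σ → σ = ⊤) :
    n - 1 ≤ ∑ B ∈ π.parts, (B.card - 1) := by
  rcases Nat.eq_zero_or_pos n with hn | hn
  · simp [hn]
  -- the sum identity : ∑ (card - 1) + number of parts = N
  have hsum : ∑ B ∈ π.parts, B.card = N := by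
    have := π.sum_card_parts
    simpa using this
  have hsum1 : ∑ B ∈ π.parts, ((B.card - 1) + 1) = N := by
    exact (sum_congr rfl fun B hB =>
      Nat.succ_pred_eq_of_pos (card_pos.2 (π.nonempty_of_mem_parts hB))).trans hsum
  rw [sum_add_distrib, sum_const, smul_eq_mul, mul_one] at hsum1
  -- ρ has exactly n parts
  have hlt : ∀ s : Fin n, c s.castSucc < c s.succ := fun s => hc (Fin.castSucc_lt_succ : s.castSucc < s.succ)
  have hltN : ∀ s : Fin n, c s.castSucc < N := fun s =>
    lt_of_lt_of_le (hlt s) (hcN ▸ hc.monotone (Fin.le_last _))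
  have hinj : Function.Injective (fun s : Fin n => Finset.univ.filter
      (fun j : Fin N => c s.castSucc ≤ (j : ℕ) ∧ (j : ℕ) < c s.succ)) := by
    intro s t hst
    simp only at hst
    have hmem : ∀ (u v : Fin n),
        (Finset.univ.filter (fun j : Fin N => c u.castSucc ≤ (j : ℕ) ∧ (j : ℕ) < c u.succ)) =
        (Finset.univ.filter (fun j : Fin N => c v.castSucc ≤ (j : ℕ) ∧ (j : ℕ) < c v.succ)) →
        c v.castSucc ≤ c u.castSucc := by
      intro u v huv
      have hju : (⟨c u.castSucc, hltN u⟩ : Fin N) ∈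
          Finset.univ.filter (fun j : Fin N => c u.castSucc ≤ (j : ℕ) ∧ (j : ℕ) < c u.succ) :=
        mem_filter.2 ⟨mem_univ _, le_refl _, hlt u⟩
      rw [huv] at hju
      exact (mem_filter.1 hju).2.1
    have h1 := hmem s t hst
    have h2 := hmem t s hst.symm
    have : (s.castSucc : Fin (n+1)) = t.castSucc := hc.injective (le_antisymm h2 h1)
    exact Fin.castSucc_injective n this
  have hcard : ρ.parts.card = n := by
    rw [hρ, card_image_of_injective _ hinj, card_univ, Fintype.card_fin]
  have := key_card ρ.parts.card ρ π le_rfl hjoin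
  omega
end

section
/- Brillinger's formula: let E : A → C factor as E = E^• ∘ E^id through a commutative intermediate algebra, where E^id : A → A^• and E^• : A^• → C are unital linear maps with E^• ∘ E^id = E. Then for commuting elements x_1,...,x_n in A, the cumulants satisfy k(x_1,...,x_n) = Σ_π k^•[ k^id(x_i : i ∈ π_j) : j = 1,2,... ], summing over all set partitions π = {π_1, π_2, ...} of {1,...,n}, where k, k^•, k^id are the cumulants associated with E, E^•, E^id respectively (each defined by the moment-cumulant relation over set partitions). -/
open Finset

/-- The cumulants `k_φ(x_i : i ∈ s)` associated with a linear expectation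
`φ : A → B`, given by the Möbius-inversion formula over set partitions, equivalently
defined by the moment–cumulant relation `φ(∏_{i∈s} x_i) = ∑_π ∏_{B ∈ π} k_φ(x_i : i ∈ B)`. -/
noncomputable def algCumulantOn {ι A B : Type*} [DecidableEq ι] [CommRing A] [CommRing B]
    (φ : A → B) (s : Finset ι) (x : ι → A) : B :=
  ∑ π : Finpartition s,
    (((-1 : ℤ) ^ (π.parts.card - 1) * (π.parts.card - 1).factorial : ℤ) : B) *
      ∏ blk ∈ π.parts, φ (∏ i ∈ blk, x i)

namespace Brill

variable {ι : Type*} [DecidableEq ι] {s : Finset ι} {B : Finset ι}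

/-- Möbius coefficient. -/
def mu1 (k : ℕ) : ℤ := (-1 : ℤ) ^ (k - 1) * (k - 1).factorial

theorem mu1_rec (m : ℕ) (hm : 1 ≤ m) :
    mu1 m + ((m - 1 : ℕ) : ℤ) * mu1 (m - 1) = if m ≤ 1 then 1 else 0 := by
  match m, hm with
  | 1, _ => simp [mu1]
  | (k+2), _ =>
    have h1 : k + 2 - 1 = k + 1 := rfl
    have h2 : k + 2 - 1 - 1 = k := rfl
    simp only [mu1, h1, h2, Nat.factorial_succ, Nat.add_sub_cancel]
    have : ¬ (k + 2 ≤ 1) := by omega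
    rw [if_neg this]
    push_cast
    ring

theorem fpHEq {β : Type*} [Lattice β] [OrderBot β] {a b : β} (h : a = b) {P : Finpartition a}
    {Q : Finpartition b} (hp : P.parts = Q.parts) : HEq P Q := by
  subst h; exact heq_of_eq (Finpartition.ext hp)

theorem sup_erase_part (θ : Finpartition s) (hB : B ∈ θ.parts) :
    (θ.parts.erase B).sup id = s \ B := by
  ext i
  simp only [mem_sup, mem_erase, id, mem_sdiff]
  constructor
  · rintro ⟨b, ⟨hbB, hb⟩, hib⟩
    refine ⟨θ.le hb hib, fun hiB => hbB ?_⟩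
    exact θ.eq_of_mem_parts hb hB hib hiB
  · rintro ⟨his, hiB⟩
    obtain ⟨b, hb, hib⟩ := θ.exists_mem his
    exact ⟨b, ⟨fun h => hiB (h ▸ hib), hb⟩, hib⟩

/-- Restrict a finpartition to the complement of one of its parts. -/
def restrictErase (θ : Finpartition s) (hB : B ∈ θ.parts) : Finpartition (s \ B) :=
  θ.ofSubset (erase_subset _ _) (sup_erase_part θ hB)

@[simp] theorem restrictErase_parts (θ : Finpartition s) (hB : B ∈ θ.parts) :
    (restrictErase θ hB).parts = θ.parts.erase B := rfl

/-- Decompose a finpartition of `s` by the block containing `a`. -/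
def blockEquiv (a : ι) (ha : a ∈ s) :
    Finpartition s ≃ Σ B : {B : Finset ι // B ⊆ s ∧ a ∈ B}, Finpartition (s \ B.1) where
  toFun θ := ⟨⟨θ.part a, θ.le (θ.part_mem.2 ha), θ.mem_part ha⟩, restrictErase θ (θ.part_mem.2 ha)⟩
  invFun p := p.2.extend (nonempty_iff_ne_empty.1 ⟨a, p.1.2.2⟩)
    sdiff_disjoint (sdiff_sup_cancel p.1.2.1)
  left_inv θ := by
    apply Finpartition.ext
    simp only [Finpartition.extend_parts, restrictErase_parts]
    exact insert_erase (θ.part_mem.2 ha)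
  right_inv := by
    rintro ⟨⟨B, hBs, haB⟩, θ'⟩
    have hBnot : B ∉ θ'.parts := by
      intro h
      have := θ'.le h
      exact (mem_sdiff.1 (this haB)).2 haB
    have h1 : (θ'.extend (b := B) (nonempty_iff_ne_empty.1 ⟨a, haB⟩)
          sdiff_disjoint (sdiff_sup_cancel hBs)).part a = B := by
      apply Finpartition.part_eq_of_mem
      · simp only [Finpartition.extend_parts]; exact mem_insert_self _ _
      · exact haB
    dsimp only
    refine Sigma.ext (Subtype.ext h1) (fpHEq (by dsimp only; rw [h1]) ?_)
    simp only [restrictErase_parts, Finpartition.extend_parts, h1]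
    exact erase_insert hBnot

theorem sum_mu1 [Fintype ι] (s : Finset ι) :
    ∑ θ : Finpartition s, ∏ b ∈ θ.parts, mu1 b.card = if s.card ≤ 1 then 1 else 0 := by
  induction s using Finset.strongInduction with
  | _ s ih =>
  rcases s.eq_empty_or_nonempty with rfl | ⟨a, ha⟩
  · have h : ∀ θ : Finpartition (∅ : Finset ι), θ.parts = ∅ := fun θ =>
      Finpartition.parts_eq_empty_iff.2 bot_eq_empty.symm
    rw [if_pos (by simp)]
    calc ∑ θ : Finpartition (∅ : Finset ι), ∏ b ∈ θ.parts, mu1 b.card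
        = ∑ _θ : Finpartition (∅ : Finset ι), 1 := by
          refine Finset.sum_congr rfl fun θ _ => ?_
          rw [h θ, prod_empty]
      _ = 1 := by
          rw [Finset.sum_const, card_univ,
            Fintype.card_eq_one_iff.2 ⟨⊥, fun y => Finpartition.ext (by rw [h y, h ⊥])⟩]
          simp
  · have hcard : 1 ≤ s.card := Finset.card_pos.2 ⟨a, ha⟩
    calc ∑ θ : Finpartition s, ∏ b ∈ θ.parts, mu1 b.card
        = ∑ p : Σ B : {B : Finset ι // B ⊆ s ∧ a ∈ B}, Finpartition (s \ B.1),
            mu1 p.1.1.card * ∏ b ∈ p.2.parts, mu1 b.card := by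
          refine Fintype.sum_equiv (blockEquiv a ha) _ _ fun θ => ?_
          exact (Finset.mul_prod_erase _ _ (θ.part_mem.2 ha)).symm
      _ = ∑ B : {B : Finset ι // B ⊆ s ∧ a ∈ B}, ∑ θ' : Finpartition (s \ B.1),
            mu1 B.1.card * ∏ b ∈ θ'.parts, mu1 b.card := by
          rw [← Finset.univ_sigma_univ, Finset.sum_sigma]
      _ = ∑ B : {B : Finset ι // B ⊆ s ∧ a ∈ B},
            (if (s \ B.1).card ≤ 1 then mu1 B.1.card else 0) := by
          refine Finset.sum_congr rfl fun B _ => ?_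
          rw [← Finset.mul_sum, ih (s \ B.1) (sdiff_ssubset B.2.1 ⟨a, B.2.2⟩)]
          split <;> ring
      _ = ∑ B ∈ s.powerset.filter (fun B => a ∈ B),
            (if (s \ B).card ≤ 1 then mu1 B.card else 0) := by
          exact (Finset.sum_subtype _ (fun B => by simp [Finset.mem_powerset])
            (fun B => if (s \ B).card ≤ 1 then mu1 B.card else 0)).symm
      _ = ∑ B ∈ (s.powerset.filter (fun B => a ∈ B)).filter (fun B => (s \ B).card ≤ 1),
            mu1 B.card := (Finset.sum_filter _ _).symm
      _ = ∑ B ∈ insert s ((s.erase a).image (fun y => s.erase y)), mu1 B.card := by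
          congr 1
          ext B
          simp only [mem_filter, mem_powerset, mem_insert, mem_image, mem_erase]
          constructor
          · rintro ⟨⟨hBs, haB⟩, hc⟩
            have : Nonempty ι := ⟨a⟩
            obtain ⟨y, hy⟩ := Finset.card_le_one_iff_subset_singleton.1 hc
            rcases Finset.subset_singleton_iff.1 hy with h0 | h1
            · left
              exact Finset.Subset.antisymm hBs (Finset.sdiff_eq_empty_iff_subset.1 h0)
            · right
              refine ⟨y, ⟨?_, ?_⟩, ?_⟩
              · intro h
                have hy' : y ∈ s \ B := h1 ▸ mem_singleton_self y
                exact (mem_sdiff.1 hy').2 (by rw [h]; exact haB)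
              · have : y ∈ s \ B := h1 ▸ mem_singleton_self y
                exact (mem_sdiff.1 this).1
              · rw [Finset.erase_eq, ← h1, Finset.sdiff_sdiff_eq_self hBs]
          · rintro (rfl | ⟨y, ⟨hya, hys⟩, rfl⟩)
            · exact ⟨⟨Finset.Subset.refl _, ha⟩, by simp⟩
            · refine ⟨⟨erase_subset _ _, mem_erase.2 ⟨Ne.symm hya, ha⟩⟩, ?_⟩
              rw [Finset.erase_eq, Finset.sdiff_sdiff_eq_self (singleton_subset_iff.2 hys)]
              simp
      _ = mu1 s.card + ((s.card - 1 : ℕ) : ℤ) * mu1 (s.card - 1) := by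
          have hnotmem : s ∉ (s.erase a).image (fun y => s.erase y) := by
            intro h
            obtain ⟨y, hy, hey⟩ := mem_image.1 h
            have := congrArg Finset.card hey
            rw [Finset.card_erase_of_mem (mem_of_mem_erase hy)] at this
            omega
          rw [Finset.sum_insert hnotmem,
            Finset.sum_image (fun y hy y' hy' h =>
              s.erase_injOn (mem_of_mem_erase hy) (mem_of_mem_erase hy') h)]
          congr 1
          rw [Finset.sum_congr rfl
              (fun y hy => by rw [Finset.card_erase_of_mem (mem_of_mem_erase hy)]),
            Finset.sum_const, Finset.card_erase_of_mem ha, nsmul_eq_mul]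
      _ = if s.card ≤ 1 then 1 else 0 := mu1_rec s.card hcard


theorem heqFun {s : Finset ι} {P Q : Finpartition s} (h : P = Q)
    {f : ∀ B : P.parts, Finpartition (B : Finset ι)}
    {g : ∀ B : Q.parts, Finpartition (B : Finset ι)}
    (hfg : ∀ (B : Finset ι) (hB : B ∈ P.parts) (hB' : B ∈ Q.parts), f ⟨B, hB⟩ = g ⟨B, hB'⟩) :
    HEq f g := by
  subst h
  exact heq_of_eq (funext fun B => by cases B with | mk B hB => exact hfg B hB hB)


variable {s : Finset ι}

theorem mem_parts_of_mem_parts {θ : Finpartition s} (σ : Finpartition θ.parts)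
    {c : Finset (Finset ι)} (hc : c ∈ σ.parts) {b : Finset ι} (hb : b ∈ c) : b ∈ θ.parts :=
  σ.le hc hb

/-- The parts of `θ` lying inside `c.sup id` are exactly the members of `c`. -/
theorem filter_sup_eq {θ : Finpartition s} (σ : Finpartition θ.parts)
    {c : Finset (Finset ι)} (hc : c ∈ σ.parts) :
    θ.parts.filter (fun b => b ⊆ c.sup id) = c := by
  ext b
  simp only [mem_filter]
  constructor
  · rintro ⟨hbθ, hbc⟩
    obtain ⟨x, hx⟩ := θ.nonempty_of_mem_parts hbθ
    obtain ⟨b', hb', hxb'⟩ := mem_sup.1 (hbc hx)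
    rwa [θ.eq_of_mem_parts hbθ (mem_parts_of_mem_parts σ hc hb') hx hxb']
  · intro hb
    exact ⟨mem_parts_of_mem_parts σ hc hb, (le_sup (f := id) hb : b ≤ c.sup id)⟩

/-- Coarsen a finpartition `θ` of `s` along a finpartition `σ` of its set of parts. -/
def joined (θ : Finpartition s) (σ : Finpartition θ.parts) : Finpartition s where
  parts := σ.parts.image (fun c => c.sup id)
  supIndep := by
    rw [supIndep_iff_pairwiseDisjoint]
    rintro x hx y hy hxy
    obtain ⟨c, hc, rfl⟩ := mem_image.1 (mem_coe.1 hx)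
    obtain ⟨c', hc', rfl⟩ := mem_image.1 (mem_coe.1 hy)
    have hcc' : c ≠ c' := fun h => hxy (by rw [h])
    have hdisj : Disjoint c c' := σ.disjoint hc hc' hcc'
    dsimp only [Function.onFun, id]
    simp only [Finset.disjoint_sup_left, Finset.disjoint_sup_right, id]
    intro b' hb' b hb
    refine θ.disjoint (mem_parts_of_mem_parts σ hc hb)
      (mem_parts_of_mem_parts σ hc' hb') fun h => ?_
    exact (Finset.disjoint_left.1 hdisj) hb (h ▸ hb')
  sup_parts := by
    ext i
    rw [sup_image]
    simp only [Function.id_comp, mem_sup, id]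
    constructor
    · rintro ⟨c, hc, b, hb, hib⟩
      exact θ.le (mem_parts_of_mem_parts σ hc hb) hib
    · intro hi
      obtain ⟨b, hb, hib⟩ := θ.exists_mem hi
      have hbσ : b ∈ σ.parts.sup id := by rw [σ.sup_parts]; exact hb
      obtain ⟨c, hc, hbc⟩ := mem_sup.1 hbσ
      exact ⟨c, hc, b, hbc, hib⟩
  bot_notMem := by
    intro h
    obtain ⟨c, hc, hcs⟩ := mem_image.1 h
    obtain ⟨b, hb⟩ := σ.nonempty_of_mem_parts hc
    have : b ⊆ c.sup id := le_sup (f := id) hb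
    rw [hcs] at this
    have hbb : b = ⊥ := le_bot_iff.1 this
    exact θ.bot_notMem (hbb ▸ mem_parts_of_mem_parts σ hc hb)

theorem mem_joined_parts {θ : Finpartition s} {σ : Finpartition θ.parts} {B : Finset ι} :
    B ∈ (joined θ σ).parts ↔ ∃ c ∈ σ.parts, c.sup id = B := by
  simp [joined]

/-- The parts of `θ` inside a block of the coarsening, as a finpartition. -/
def uPart (θ : Finpartition s) (σ : Finpartition θ.parts) (B : (joined θ σ).parts) :
    Finpartition (B : Finset ι) :=
  θ.ofSubset (filter_subset (fun b => b ⊆ (B : Finset ι)) θ.parts) (by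
    obtain ⟨c, hc, hB⟩ := mem_joined_parts.1 B.2
    rw [← hB, filter_sup_eq σ hc])

@[simp] theorem uPart_parts (θ : Finpartition s) (σ : Finpartition θ.parts)
    (B : (joined θ σ).parts) :
    (uPart θ σ B).parts = θ.parts.filter (fun b => b ⊆ (B : Finset ι)) := rfl

variable {γ : Finpartition s}

/-- `bind` as the underlying map on parts. -/
abbrev bindQ (γ : Finpartition s) (u : ∀ B : γ.parts, Finpartition (B : Finset ι)) :
    ∀ B ∈ γ.parts, Finpartition B := fun B hB => u ⟨B, hB⟩

theorem mem_bindu_parts {u : ∀ B : γ.parts, Finpartition (B : Finset ι)} {b : Finset ι} :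
    b ∈ (γ.bind (bindQ γ u)).parts ↔ ∃ B : γ.parts, b ∈ (u B).parts := by
  rw [Finpartition.mem_bind]
  exact ⟨fun ⟨A, hA, h⟩ => ⟨⟨A, hA⟩, h⟩, fun ⟨⟨A, hA⟩, h⟩ => ⟨A, hA, h⟩⟩

theorem subset_of_mem_u {u : ∀ B : γ.parts, Finpartition (B : Finset ι)} {B : γ.parts}
    {b : Finset ι} (hb : b ∈ (u B).parts) : b ⊆ (B : Finset ι) := (u B).le hb

theorem u_parts_eq_of_eq {u : ∀ B : γ.parts, Finpartition (B : Finset ι)} {B B' : γ.parts}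
    {b : Finset ι} (hb : b ∈ (u B).parts) (hb' : b ∈ (u B').parts) : B = B' := by
  obtain ⟨x, hx⟩ := (u B).nonempty_of_mem_parts hb
  exact Subtype.ext (γ.eq_of_mem_parts B.2 B'.2 (subset_of_mem_u hb hx) (subset_of_mem_u hb' hx))

/-- The partition of the parts of `γ.bind u` which groups them according to the
part of `γ` they live in. -/
def bindGroup (γ : Finpartition s) (u : ∀ B : γ.parts, Finpartition (B : Finset ι)) :
    Finpartition (γ.bind (bindQ γ u)).parts where
  parts := γ.parts.attach.image (fun B => (u B).parts)
  supIndep := by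
    rw [supIndep_iff_pairwiseDisjoint]
    rintro x hx y hy hxy
    obtain ⟨B, _, rfl⟩ := mem_image.1 (mem_coe.1 hx)
    obtain ⟨B', _, rfl⟩ := mem_image.1 (mem_coe.1 hy)
    dsimp only [Function.onFun, id]
    rw [Finset.disjoint_left]
    intro b hb hb'
    exact hxy (by rw [u_parts_eq_of_eq hb hb'])
  sup_parts := by
    ext b
    rw [sup_image, Function.id_comp]
    simp only [mem_sup, mem_attach, true_and, mem_bindu_parts]
  bot_notMem := by
    intro h
    obtain ⟨B, _, hB⟩ := mem_image.1 h
    exact γ.bot_notMem (Finpartition.parts_eq_empty_iff.1 hB ▸ B.2)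

/-- The master bijection: a pair of a finpartition together with finpartitions of each
of its parts corresponds to a pair of a finpartition with a finpartition of its set of
parts.  -/
def bindSigma (s : Finset ι) :
    (Σ γ : Finpartition s, ∀ B : γ.parts, Finpartition (B : Finset ι)) ≃
      Σ θ : Finpartition s, Finpartition θ.parts where
  toFun p := ⟨p.1.bind (bindQ p.1 p.2), bindGroup p.1 p.2⟩
  invFun p := ⟨joined p.1 p.2, uPart p.1 p.2⟩
  left_inv := by
    rintro ⟨γ, u⟩
    have hγ : joined (γ.bind (bindQ γ u)) (bindGroup γ u) = γ := by
      apply Finpartition.ext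
      show (γ.parts.attach.image (fun B => (u B).parts)).image (fun c => c.sup id) = γ.parts
      rw [Finset.image_image]
      have : ∀ B ∈ γ.parts.attach, ((fun c => c.sup id) ∘ fun B => (u B).parts) B = B.1 :=
        fun B _ => (u B).sup_parts
      rw [Finset.image_congr fun B hB => this B hB, Finset.attach_image_val]
    refine Sigma.ext hγ (heqFun hγ fun B hB hB' => ?_)
    show uPart (γ.bind (bindQ γ u)) (bindGroup γ u) ⟨B, hB⟩ = u ⟨B, hB'⟩
    apply Finpartition.ext
    rw [uPart_parts]
    ext b
    rw [mem_filter, mem_bindu_parts]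
    constructor
    · rintro ⟨⟨B₀, hb⟩, hbB⟩
      have hBB : B₀ = ⟨B, hB'⟩ := by
        apply Subtype.ext
        obtain ⟨x, hx⟩ := (u B₀).nonempty_of_mem_parts hb
        exact γ.eq_of_mem_parts B₀.2 hB' (subset_of_mem_u hb hx) (hbB hx)
      subst hBB
      exact hb
    · intro hb
      exact ⟨⟨⟨B, hB'⟩, hb⟩, (subset_of_mem_u hb : b ⊆ B)⟩
  right_inv := by
    rintro ⟨θ, σ⟩
    have hθ : (joined θ σ).bind (bindQ _ (uPart θ σ)) = θ := by
      apply Finpartition.ext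
      ext b
      rw [mem_bindu_parts]
      constructor
      · rintro ⟨B, hb⟩
        rw [uPart_parts] at hb
        exact (mem_filter.1 hb).1
      · intro hb
        have hbσ : b ∈ σ.parts.sup id := by rw [σ.sup_parts]; exact hb
        obtain ⟨c, hc, hbc⟩ := mem_sup.1 hbσ
        refine ⟨⟨c.sup id, mem_joined_parts.2 ⟨c, hc, rfl⟩⟩, ?_⟩
        rw [uPart_parts, mem_filter]
        exact ⟨hb, le_sup (f := id) hbc⟩
    have hparts : (bindGroup (joined θ σ) (uPart θ σ)).parts = σ.parts := by
      show (joined θ σ).parts.attach.image (fun B => (uPart θ σ B).parts) = σ.parts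
      ext c
      simp only [mem_image, mem_attach, true_and]
      constructor
      · rintro ⟨B, rfl⟩
        obtain ⟨c₀, hc₀, hB⟩ := mem_joined_parts.1 B.2
        rw [uPart_parts]
        have : (B : Finset ι) = c₀.sup id := hB.symm
        rw [this, filter_sup_eq σ hc₀]
        exact hc₀
      · intro hc
        refine ⟨⟨c.sup id, mem_joined_parts.2 ⟨c, hc, rfl⟩⟩, ?_⟩
        rw [uPart_parts]
        exact filter_sup_eq σ hc
    exact Sigma.ext hθ (fpHEq (congrArg Finpartition.parts hθ) hparts)


theorem uparts_injOn (u : ∀ B : γ.parts, Finpartition (B : Finset ι)) :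
    ∀ B ∈ γ.parts.attach, ∀ B' ∈ γ.parts.attach, (u B).parts = (u B').parts → B = B' := by
  intro B _ B' _ h
  apply Subtype.ext
  rw [← (u B).sup_parts, h, (u B').sup_parts]

theorem bindGroup_card (u : ∀ B : γ.parts, Finpartition (B : Finset ι)) :
    (bindGroup γ u).parts.card = γ.parts.card := by
  show (γ.parts.attach.image (fun B => (u B).parts)).card = _
  rw [Finset.card_image_of_injOn (fun B hB B' hB' h => uparts_injOn u B hB B' hB' h),
    card_attach]

theorem prod_bindGroup {M : Type*} [CommMonoid M] (u : ∀ B : γ.parts, Finpartition (B : Finset ι))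
    (g : Finset (Finset ι) → M) :
    ∏ c ∈ (bindGroup γ u).parts, g c = ∏ B ∈ γ.parts.attach, g (u B).parts :=
  Finset.prod_image (fun B hB B' hB' h => uparts_injOn u B hB B' hB' h)

theorem prod_bind_parts {M : Type*} [CommMonoid M]
    (u : ∀ B : γ.parts, Finpartition (B : Finset ι)) (f : Finset ι → M) :
    ∏ b ∈ (γ.bind (bindQ γ u)).parts, f b = ∏ B ∈ γ.parts.attach, ∏ b ∈ (u B).parts, f b := by
  show ∏ b ∈ γ.parts.attach.biUnion (fun B => (u B).parts), f b = _
  refine Finset.prod_biUnion ?_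
  rintro B _ B' _ hBB'
  rw [Function.onFun, Finset.disjoint_left]
  intro b hb hb'
  exact hBB' (u_parts_eq_of_eq hb hb')



theorem algCumulantOn_eq {ι A B : Type*} [DecidableEq ι] [CommRing A] [CommRing B]
    (φ : A → B) (s : Finset ι) (x : ι → A) :
    algCumulantOn φ s x =
      ∑ π : Finpartition s, ((mu1 π.parts.card : ℤ) : B) * ∏ blk ∈ π.parts, φ (∏ i ∈ blk, x i) :=
  rfl

variable {A A' : Type*} [CommRing A] [CommRing A'] [Algebra ℝ A] [Algebra ℝ A']

theorem ebul_cast_mul (Ebul : A' →ₗ[ℝ] ℝ) (k : ℤ) (a : A') :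
    Ebul ((k : A') * a) = (k : ℝ) * Ebul a := by
  rw [← zsmul_eq_mul, map_zsmul, zsmul_eq_mul]

theorem inner_T {ι : Type*} [Fintype ι] [DecidableEq ι]
    (Eid : A →ₗ[ℝ] A') (Ebul : A' →ₗ[ℝ] ℝ) (x : ι → A)
    (B : Finset ι) (hB : B.Nonempty) :
    ∑ v : Finpartition B, Ebul (∏ blk ∈ v.parts, algCumulantOn (fun a => Eid a) blk x)
      = Ebul (Eid (∏ i ∈ B, x i)) := by
  have hexp : ∀ v : Finpartition B,
      ∏ blk ∈ v.parts, algCumulantOn (fun a => Eid a) blk x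
        = ∑ w : (∀ blk : v.parts, Finpartition (blk : Finset ι)),
            (((∏ blk ∈ v.parts.attach, mu1 (w blk).parts.card : ℤ)) : A') *
              ∏ blk ∈ v.parts.attach, ∏ D ∈ (w blk).parts, Eid (∏ i ∈ D, x i) := by
    intro v
    rw [← Finset.prod_attach v.parts (fun blk => algCumulantOn (fun a => Eid a) blk x)]
    calc ∏ blk ∈ v.parts.attach, algCumulantOn (fun a => Eid a) (blk : Finset ι) x
        = ∏ blk : v.parts, ∑ τ ∈ (univ : Finset (Finpartition (blk : Finset ι))),
            ((mu1 τ.parts.card : ℤ) : A') * ∏ D ∈ τ.parts, Eid (∏ i ∈ D, x i) := by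
          rw [← Finset.univ_eq_attach]
          exact Finset.prod_congr rfl fun blk _ => algCumulantOn_eq _ _ _
      _ = ∑ w ∈ Fintype.piFinset (fun _ : v.parts => (univ : Finset (Finpartition _))),
            ∏ blk : v.parts,
              ((mu1 (w blk).parts.card : ℤ) : A') * ∏ D ∈ (w blk).parts, Eid (∏ i ∈ D, x i) :=
          Finset.prod_univ_sum _ _
      _ = ∑ w : (∀ blk : v.parts, Finpartition (blk : Finset ι)),
            (((∏ blk ∈ v.parts.attach, mu1 (w blk).parts.card : ℤ)) : A') *
              ∏ blk ∈ v.parts.attach, ∏ D ∈ (w blk).parts, Eid (∏ i ∈ D, x i) := by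
          rw [Fintype.piFinset_univ]
          refine Finset.sum_congr rfl fun w _ => ?_
          rw [← Finset.univ_eq_attach, Finset.prod_mul_distrib]
          push_cast
          ring
  calc ∑ v : Finpartition B, Ebul (∏ blk ∈ v.parts, algCumulantOn (fun a => Eid a) blk x)
      = ∑ v : Finpartition B, ∑ w : (∀ blk : v.parts, Finpartition (blk : Finset ι)),
          (((∏ blk ∈ v.parts.attach, mu1 (w blk).parts.card : ℤ)) : ℝ) *
            Ebul (∏ blk ∈ v.parts.attach, ∏ D ∈ (w blk).parts, Eid (∏ i ∈ D, x i)) := by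
        refine Finset.sum_congr rfl fun v _ => ?_
        rw [hexp v, map_sum]
        exact Finset.sum_congr rfl fun w _ => ebul_cast_mul Ebul _ _
    _ = ∑ q : (Σ v : Finpartition B, ∀ blk : v.parts, Finpartition (blk : Finset ι)),
          (((∏ blk ∈ q.1.parts.attach, mu1 (q.2 blk).parts.card : ℤ)) : ℝ) *
            Ebul (∏ blk ∈ q.1.parts.attach, ∏ D ∈ (q.2 blk).parts, Eid (∏ i ∈ D, x i)) := by
        rw [← Finset.univ_sigma_univ, Finset.sum_sigma]
    _ = ∑ p : (Σ ρ : Finpartition B, Finpartition ρ.parts),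
          (((∏ c ∈ p.2.parts, mu1 c.card : ℤ)) : ℝ) *
            Ebul (∏ D ∈ p.1.parts, Eid (∏ i ∈ D, x i)) := by
        refine Fintype.sum_equiv (bindSigma B) _ _ fun q => ?_
        rcases q with ⟨v, w⟩
        show _ = (((∏ c ∈ (bindGroup v w).parts, mu1 c.card : ℤ)) : ℝ) *
            Ebul (∏ D ∈ (v.bind (bindQ v w)).parts, Eid (∏ i ∈ D, x i))
        rw [prod_bindGroup, prod_bind_parts]
    _ = ∑ ρ : Finpartition B,
          (((∑ σ : Finpartition ρ.parts, ∏ c ∈ σ.parts, mu1 c.card : ℤ)) : ℝ) *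
            Ebul (∏ D ∈ ρ.parts, Eid (∏ i ∈ D, x i)) := by
        rw [← Finset.univ_sigma_univ, Finset.sum_sigma]
        refine Finset.sum_congr rfl fun ρ _ => ?_
        dsimp only
        rw [← Finset.sum_mul, ← Int.cast_sum]
    _ = Ebul (Eid (∏ i ∈ B, x i)) := by
        have hBne : B ≠ ⊥ := by
          rw [bot_eq_empty]
          exact nonempty_iff_ne_empty.1 hB
        have hind : ∀ ρ : Finpartition B,
            (((∑ σ : Finpartition ρ.parts, ∏ c ∈ σ.parts, mu1 c.card : ℤ)) : ℝ) *
              Ebul (∏ D ∈ ρ.parts, Eid (∏ i ∈ D, x i))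
            = if ρ = Finpartition.indiscrete hBne then
                Ebul (Eid (∏ i ∈ B, x i)) else 0 := by
          intro ρ
          rw [sum_mu1]
          by_cases h : ρ = Finpartition.indiscrete hBne
          · subst h
            rw [if_pos rfl]
            simp only [Finpartition.indiscrete_parts, Finset.card_singleton,
              Finset.prod_singleton]
            norm_num
          · rw [if_neg h]
            have hcard : ¬ ρ.parts.card ≤ 1 := by
              intro hc
              apply h
              have hne : ρ.parts.Nonempty := ρ.parts_nonempty hBne
              have h1 : ρ.parts.card = 1 := le_antisymm hc (Finset.card_pos.2 hne)
              obtain ⟨b, hb⟩ := Finset.card_eq_one.1 h1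
              have hbB : b = B := by
                have := ρ.sup_parts
                rw [hb, Finset.sup_singleton] at this
                exact this
              apply Finpartition.ext
              rw [hb, hbB, Finpartition.indiscrete_parts]
            rw [if_neg hcard, Int.cast_zero, zero_mul]
        rw [Finset.sum_congr rfl (fun ρ _ => hind ρ), Finset.sum_ite_eq' univ
          (Finpartition.indiscrete hBne) (fun _ => Ebul (Eid (∏ i ∈ B, x i))),
          if_pos (mem_univ _)]

end Brill

set_option maxHeartbeats 1000000 in
/-- Brillinger's formula: if the expectation `E : A → ℝ` factors as
`E = E^• ∘ E^id` through a commutative intermediate algebra `A^•`, where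
`E^id : A → A^•` and `E^• : A^• → ℝ` are unital linear maps, then for (commuting)
elements `x₁,…,xₙ` of the commutative algebra `A`,
`k(x₁,…,xₙ) = ∑_π k^•[ k^id(x_i : i ∈ π_j) : j ]`, summed over all set partitions `π`
of `{1,…,n}`, where `k`, `k^•`, `k^id` are the cumulants associated with `E`, `E^•`,
`E^id` respectively. -/
theorem brillinger_formula {A A' : Type*} [CommRing A] [CommRing A']
    [Algebra ℝ A] [Algebra ℝ A']
    (Eid : A →ₗ[ℝ] A') (Ebul : A' →ₗ[ℝ] ℝ)
    (hEid1 : Eid 1 = 1) (hEbul1 : Ebul 1 = 1)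
    {n : ℕ} (x : Fin n → A) :
    algCumulantOn (fun a => Ebul (Eid a)) (Finset.univ : Finset (Fin n)) x =
      ∑ π : Finpartition (Finset.univ : Finset (Fin n)),
        algCumulantOn (fun a => Ebul a) π.parts
          (fun blk => algCumulantOn (fun a => Eid a) blk x) := by
  symm
  calc ∑ π : Finpartition (univ : Finset (Fin n)),
        algCumulantOn (fun a => Ebul a) π.parts (fun blk => algCumulantOn (fun a => Eid a) blk x)
      = ∑ π : Finpartition (univ : Finset (Fin n)), ∑ σ : Finpartition π.parts,
          ((Brill.mu1 σ.parts.card : ℤ) : ℝ) *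
            ∏ C ∈ σ.parts, Ebul (∏ blk ∈ C, algCumulantOn (fun a => Eid a) blk x) :=
        Finset.sum_congr rfl fun π _ => Brill.algCumulantOn_eq _ _ _
    _ = ∑ p : Σ θ : Finpartition (univ : Finset (Fin n)), Finpartition θ.parts,
          ((Brill.mu1 p.2.parts.card : ℤ) : ℝ) *
            ∏ C ∈ p.2.parts, Ebul (∏ blk ∈ C, algCumulantOn (fun a => Eid a) blk x) := by
        rw [← Finset.univ_sigma_univ, Finset.sum_sigma]
    _ = ∑ q : Σ γ : Finpartition (univ : Finset (Fin n)),
            ∀ B : γ.parts, Finpartition (B : Finset (Fin n)),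
          ((Brill.mu1 q.1.parts.card : ℤ) : ℝ) * ∏ B ∈ q.1.parts.attach,
            Ebul (∏ blk ∈ (q.2 B).parts, algCumulantOn (fun a => Eid a) blk x) := by
        refine (Fintype.sum_equiv (Brill.bindSigma univ) _ _ fun q => ?_).symm
        rcases q with ⟨γ, u⟩
        show ((Brill.mu1 γ.parts.card : ℤ) : ℝ) * _
          = ((Brill.mu1 (Brill.bindGroup γ u).parts.card : ℤ) : ℝ) *
            ∏ C ∈ (Brill.bindGroup γ u).parts,
              Ebul (∏ blk ∈ C, algCumulantOn (fun a => Eid a) blk x)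
        rw [Brill.bindGroup_card, Brill.prod_bindGroup]
    _ = ∑ γ : Finpartition (univ : Finset (Fin n)),
          ((Brill.mu1 γ.parts.card : ℤ) : ℝ) * ∏ B ∈ γ.parts.attach,
            (∑ v : Finpartition (B : Finset (Fin n)),
              Ebul (∏ blk ∈ v.parts, algCumulantOn (fun a => Eid a) blk x)) := by
        rw [← Finset.univ_sigma_univ, Finset.sum_sigma]
        refine Finset.sum_congr rfl fun γ _ => ?_
        dsimp only
        rw [← Finset.mul_sum]
        congr 1
        rw [← Finset.univ_eq_attach,
          Finset.prod_univ_sum (fun _ : γ.parts => (univ : Finset (Finpartition _)))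
            (fun B v => Ebul (∏ blk ∈ v.parts, algCumulantOn (fun a => Eid a) blk x)),
          Fintype.piFinset_univ]
    _ = ∑ γ : Finpartition (univ : Finset (Fin n)),
          ((Brill.mu1 γ.parts.card : ℤ) : ℝ) * ∏ B ∈ γ.parts, Ebul (Eid (∏ i ∈ B, x i)) := by
        refine Finset.sum_congr rfl fun γ _ => ?_
        congr 1
        rw [← Finset.prod_attach γ.parts (fun B => Ebul (Eid (∏ i ∈ B, x i)))]
        exact Finset.prod_congr rfl fun B _ =>
          Brill.inner_T Eid Ebul x B (γ.nonempty_of_mem_parts B.2)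
    _ = algCumulantOn (fun a => Ebul (Eid a)) (univ : Finset (Fin n)) x :=
        (Brill.algCumulantOn_eq (fun a => Ebul (Eid a)) (univ : Finset (Fin n)) x).symm
end

section
/- Leonov–Shiryaev formula for cumulants of products: let i_1 < i_2 < ... < i_{n+1} be integers and X_{i_1+1},...,X_{i_{n+1}} bounded commuting random variables. Then k(Π_{i_1<j≤i_2} X_j, ..., Π_{i_n<j≤i_{n+1}} X_j) = Σ_π k_π(X_{i_1+1},...,X_{i_{n+1}}), where the sum runs over all set partitions π of {i_1+1,...,i_{n+1}} such that π ∨ {ρ_1,...,ρ_n} is the one-block partition, with ρ_s = {i_s+1,...,i_{s+1}}. -/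
open Finset MeasureTheory

/-- The joint classical cumulant of the subfamily `(X i : i ∈ s)` of random variables,
given by the Möbius-inversion (partition) formula, equivalent to the coefficient
`∂ⁿ/∂t₁⋯∂tₙ|₀ log E[exp(∑ tᵢ Xᵢ)]` of the log moment generating function. -/
noncomputable def jointCumulantOn {Ω : Type*} [MeasurableSpace Ω] (μ : Measure Ω)
    {n : ℕ} (X : Fin n → Ω → ℝ) (s : Finset (Fin n)) : ℝ :=
  ∑ π : Finpartition s,
    (-1 : ℝ) ^ (π.parts.card - 1) * (π.parts.card - 1).factorial *
      ∏ B ∈ π.parts, ∫ ω, (∏ i ∈ B, X i ω) ∂μ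

/-- The joint classical cumulant `k(X₁,…,Xₙ)`. -/
noncomputable def jointCumulant {Ω : Type*} [MeasurableSpace Ω] (μ : Measure Ω)
    {n : ℕ} (X : Fin n → Ω → ℝ) : ℝ :=
  jointCumulantOn μ X Finset.univ


open scoped Classical

namespace LS

noncomputable def f (k : ℕ) : ℝ := (-1 : ℝ) ^ (k - 1) * (k - 1).factorial

variable {α β : Type*} [DecidableEq α] [DecidableEq β]

section Push

variable {s : Finset α} {T : Finset β} {F : β → Finset α}

/-- hypotheses bundle -/
structure Good (T : Finset β) (F : β → Finset α) (s : Finset α) : Prop where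
  disj : ∀ b ∈ T, ∀ b' ∈ T, b ≠ b' → Disjoint (F b) (F b')
  ne : ∀ b ∈ T, (F b).Nonempty
  cover : T.biUnion F = s

namespace Good

variable (h : Good T F s)
include h

theorem subset_ground {b : β} (hb : b ∈ T) : F b ⊆ s := by
  rw [← h.cover]; exact subset_biUnion_of_mem F hb

/-- push a partition of `T` to a partition of `s` -/
noncomputable def push (l : Finpartition T) : Finpartition s where
  parts := l.parts.image fun P => P.biUnion F
  supIndep := by
    rw [supIndep_iff_pairwiseDisjoint]
    intro x hx y hy hxy
    simp only [coe_image, Set.mem_image, mem_coe] at hx hy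
    obtain ⟨P, hP, rfl⟩ := hx
    obtain ⟨Q, hQ, rfl⟩ := hy
    have hPQ : P ≠ Q := by rintro rfl; exact hxy rfl
    show Disjoint (P.biUnion F) (Q.biUnion F)
    rw [Finset.disjoint_biUnion_left]
    intro b hb
    rw [Finset.disjoint_biUnion_right]
    intro b' hb'
    refine h.disj b (l.le hP hb) b' (l.le hQ hb') ?_
    rintro rfl
    exact hPQ (l.eq_of_mem_parts hP hQ hb hb')
  sup_parts := by
    have : (l.parts.image fun P => P.biUnion F).sup id
        = l.parts.sup (fun P => P.biUnion F) := sup_image _ _ _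
    rw [this]
    have h2 : l.parts.sup (fun P => P.biUnion F) = l.parts.sup (fun P => P.sup F) := by
      refine Finset.sup_congr rfl fun P _ => ?_
      simp [Finset.sup_eq_biUnion]
    rw [h2, ← Finset.sup_biUnion]
    have h3 : l.parts.biUnion (fun P => P) = T := l.biUnion_parts
    rw [h3, Finset.sup_eq_biUnion, h.cover]
  bot_notMem := by
    simp only [bot_eq_empty, mem_image, not_exists]
    intro P hPe
    rcases hPe with ⟨hP, hPe⟩
    obtain ⟨b, hb⟩ := l.nonempty_of_mem_parts hP
    obtain ⟨a, ha⟩ := h.ne b (l.le hP hb)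
    have : a ∈ P.biUnion F := mem_biUnion.2 ⟨b, hb, ha⟩
    rw [hPe] at this
    exact notMem_empty a this

theorem push_parts (l : Finpartition T) :
    (push h l).parts = l.parts.image fun P => P.biUnion F := rfl

theorem filter_push {l : Finpartition T} {P : Finset β} (hP : P ∈ l.parts) :
    T.filter (fun b => F b ⊆ P.biUnion F) = P := by
  ext b
  simp only [mem_filter]
  constructor
  · rintro ⟨hbT, hbsub⟩
    obtain ⟨Q, hQ, hbQ⟩ := l.exists_mem hbT
    rcases eq_or_ne Q P with rfl | hQP
    · exact hbQ
    · exfalso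
      obtain ⟨a, ha⟩ := h.ne b hbT
      have ha' : a ∈ P.biUnion F := hbsub ha
      obtain ⟨b', hb'P, hab'⟩ := mem_biUnion.1 ha'
      have hbb' : b ≠ b' := by
        rintro rfl
        exact hQP (l.eq_of_mem_parts hQ hP hbQ hb'P)
      exact Finset.disjoint_left.1 (h.disj b hbT b' (l.le hP hb'P) hbb') ha hab'
  · intro hbP
    exact ⟨l.le hP hbP, subset_biUnion_of_mem F hbP⟩

/-- saturation: `κ` is a coarsening of the pushed-bottom partition. -/
def Sat (κ : Finpartition s) : Prop :=
  ∀ C ∈ κ.parts, (T.filter fun b => F b ⊆ C).biUnion F = C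

omit h in
theorem sat_def {κ : Finpartition s} (hκ : Sat (T := T) (F := F) κ) {C : Finset α}
    (hC : C ∈ κ.parts) : (T.filter fun b => F b ⊆ C).biUnion F = C := hκ C hC

theorem sat_push (l : Finpartition T) : Sat (T := T) (F := F) (push h l) := by
  intro C hC
  rw [push_parts, mem_image] at hC
  obtain ⟨P, hP, rfl⟩ := hC
  rw [filter_push h hP]

/-- pull a saturated partition of `s` back to a partition of `T` -/
noncomputable def pull (κ : Finpartition s) : Finpartition T :=
  if hκ : Sat (T := T) (F := F) κ then
    { parts := κ.parts.image fun C => T.filter fun b => F b ⊆ C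
      supIndep := by
        rw [supIndep_iff_pairwiseDisjoint]
        intro x hx y hy hxy
        rw [mem_coe, mem_image] at hx hy
        obtain ⟨C, hC, rfl⟩ := hx
        obtain ⟨D, hD, rfl⟩ := hy
        have hCD : C ≠ D := by rintro rfl; exact hxy rfl
        show Disjoint _ _
        rw [Finset.disjoint_left]
        intro b hb hb'
        simp only [id_eq, mem_filter] at hb hb'
        obtain ⟨a, ha⟩ := h.ne b hb.1
        exact Finset.disjoint_left.1 (κ.disjoint hC hD hCD) (hb.2 ha) (hb'.2 ha)
      sup_parts := by
        apply le_antisymm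
        · rw [Finset.sup_le_iff]
          intro x hx
          rw [mem_image] at hx
          obtain ⟨C, _, rfl⟩ := hx
          exact filter_subset _ _
        · intro b hb
          obtain ⟨a, ha⟩ := h.ne b hb
          have has : a ∈ s := h.subset_ground hb ha
          obtain ⟨C, hC, haC⟩ := κ.exists_mem has
          have hFb : F b ⊆ C := by
            have := sat_def hκ hC
            rw [← this] at haC
            obtain ⟨b', hb', hab'⟩ := mem_biUnion.1 haC
            rw [mem_filter] at hb'
            have : b = b' := by
              by_contra hne
              exact Finset.disjoint_left.1 (h.disj b hb b' hb'.1 hne) ha hab'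
            rw [this]; exact hb'.2
          have : b ∈ T.filter fun b => F b ⊆ C := mem_filter.2 ⟨hb, hFb⟩
          exact Finset.le_sup (f := id)
            (mem_image_of_mem (fun C => T.filter fun b => F b ⊆ C) hC) this
      bot_notMem := by
        simp only [bot_eq_empty, mem_image, not_exists]
        intro C hCe
        rcases hCe with ⟨hC, hCe⟩
        obtain ⟨a, ha⟩ := κ.nonempty_of_mem_parts hC
        have := sat_def hκ hC
        rw [← this] at ha
        obtain ⟨b', hb', _⟩ := mem_biUnion.1 ha
        rw [hCe] at hb'
        exact notMem_empty b' hb' }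
  else ⊥

theorem pull_parts {κ : Finpartition s} (hκ : Sat (T := T) (F := F) κ) :
    (pull h κ).parts = κ.parts.image fun C => T.filter fun b => F b ⊆ C := by
  rw [pull, dif_pos hκ]

theorem push_pull {κ : Finpartition s} (hκ : Sat (T := T) (F := F) κ) :
    push h (pull h κ) = κ := by
  apply Finpartition.ext
  rw [push_parts, pull_parts h hκ, image_image]
  conv_rhs => rw [← Finset.image_id (s := κ.parts)]
  refine image_congr fun C hC => ?_
  exact sat_def hκ hC

theorem pull_push (l : Finpartition T) : pull h (push h l) = l := by
  apply Finpartition.ext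
  rw [pull_parts h (sat_push h l), push_parts, image_image]
  conv_rhs => rw [← Finset.image_id (s := l.parts)]
  refine image_congr fun P hP => ?_
  exact filter_push h hP

theorem push_inj {l l' : Finpartition T} (hll : push h l = push h l') : l = l' := by
  rw [← pull_push h l, ← pull_push h l', hll]

theorem push_le_push_iff {l l' : Finpartition T} : push h l ≤ push h l' ↔ l ≤ l' := by
  constructor
  · intro hle P hP
    obtain ⟨C, hC, hPC⟩ := hle (mem_image_of_mem _ hP : P.biUnion F ∈ (push h l).parts)
    rw [push_parts, mem_image] at hC
    obtain ⟨Q, hQ, rfl⟩ := hC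
    refine ⟨Q, hQ, ?_⟩
    intro b hb
    rw [← filter_push h hQ, mem_filter]
    exact ⟨l.le hP hb, le_trans (subset_biUnion_of_mem F hb) hPC⟩
  · intro hle C hC
    rw [push_parts, mem_image] at hC
    obtain ⟨P, hP, rfl⟩ := hC
    obtain ⟨Q, hQ, hPQ⟩ := hle hP
    exact ⟨Q.biUnion F, mem_image_of_mem _ hQ, biUnion_subset_biUnion_of_subset_left F hPQ⟩

theorem push_bot : (push h (⊥ : Finpartition T)).parts = T.image F := by
  rw [push_parts, Finpartition.parts_bot]
  ext C
  simp only [mem_image, Finset.mem_map, Function.Embedding.coeFn_mk]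
  constructor
  · rintro ⟨P, ⟨b, hb, rfl⟩, rfl⟩
    exact ⟨b, hb, by simp⟩
  · rintro ⟨b, hb, rfl⟩
    exact ⟨{b}, ⟨b, hb, rfl⟩, by simp⟩

theorem sat_iff {κ : Finpartition s} :
    Sat (T := T) (F := F) κ ↔ push h (⊥ : Finpartition T) ≤ κ := by
  constructor
  · intro hκ C hC
    rw [push_bot h, mem_image] at hC
    obtain ⟨b, hb, rfl⟩ := hC
    obtain ⟨a, ha⟩ := h.ne b hb
    have has : a ∈ s := h.subset_ground hb ha
    obtain ⟨C, hC, haC⟩ := κ.exists_mem has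
    refine ⟨C, hC, ?_⟩
    have := sat_def hκ hC
    rw [← this] at haC
    obtain ⟨b', hb', hab'⟩ := mem_biUnion.1 haC
    rw [mem_filter] at hb'
    have hbb : b = b' := by
      by_contra hne
      exact Finset.disjoint_left.1 (h.disj b hb b' hb'.1 hne) ha hab'
    rw [hbb]; exact hb'.2
  · intro hle C hC
    apply Finset.Subset.antisymm
    · intro a ha
      obtain ⟨b, hb, hab⟩ := mem_biUnion.1 ha
      exact (mem_filter.1 hb).2 hab
    · intro a ha
      have has : a ∈ s := κ.le hC ha
      have : a ∈ T.biUnion F := h.cover ▸ has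
      obtain ⟨b, hb, hab⟩ := mem_biUnion.1 this
      have hFbm : F b ∈ (push h (⊥ : Finpartition T)).parts := by
        rw [push_bot h]; exact mem_image_of_mem _ hb
      obtain ⟨C', hC', hFC'⟩ := hle hFbm
      have : C' = C := κ.eq_of_mem_parts hC' hC (hFC' hab) ha
      rw [this] at hFC'
      exact mem_biUnion.2 ⟨b, mem_filter.2 ⟨hb, hFC'⟩, hab⟩

omit h in
theorem parts_top' {γ : Type*} [DecidableEq γ] {u : Finset γ} (hu : u.Nonempty) :
    (⊤ : Finpartition u).parts = {u} := by
  have h1 := Finpartition.parts_top_subset u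
  have h2 := Finpartition.parts_nonempty (⊤ : Finpartition u)
    (by simpa [Finset.bot_eq_empty] using hu.ne_empty)
  rcases Finset.subset_singleton_iff.1 h1 with he | he
  · exact absurd he h2.ne_empty
  · exact he

theorem push_top (hT : T.Nonempty) : push h (⊤ : Finpartition T) = ⊤ := by
  apply Finpartition.ext
  have hs : s.Nonempty := by
    obtain ⟨b, hb⟩ := hT
    obtain ⟨a, ha⟩ := h.ne b hb
    exact ⟨a, h.subset_ground hb ha⟩
  rw [push_parts, parts_top' hT, parts_top' hs, image_singleton, h.cover]

theorem sum_push (G : Finpartition s → ℝ) :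
    ∑ l : Finpartition T, G (push h l)
      = ∑ κ ∈ univ.filter (fun κ => Sat (T := T) (F := F) κ), G κ := by
  refine Finset.sum_nbij' (push h) (pull h) ?_ ?_ ?_ ?_ ?_
  · intro l _
    exact mem_filter.2 ⟨mem_univ _, sat_push h l⟩
  · intro κ _
    exact mem_univ _
  · intro l _
    exact pull_push h l
  · intro κ hκ
    exact push_pull h (mem_filter.1 hκ).2
  · intro l _
    rfl

theorem card_push_parts (l : Finpartition T) : #(push h l).parts = #l.parts := by
  rw [push_parts]
  apply Finset.card_image_of_injOn
  intro P hP Q hQ hPQ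
  rw [mem_coe] at hP hQ
  have e1 := filter_push h hP
  have e2 := filter_push h hQ
  simp only at hPQ
  rw [← e1, ← e2, hPQ]

theorem prod_push_parts (l : Finpartition T) (g : Finset α → ℝ) :
    ∏ C ∈ (push h l).parts, g C = ∏ P ∈ l.parts, g (P.biUnion F) := by
  rw [push_parts]
  apply Finset.prod_image
  intro P hP Q hQ hPQ
  rw [← filter_push h hP, ← filter_push h hQ, show P.biUnion F = Q.biUnion F from hPQ]

end Good

end Push

section Restr

variable {s : Finset α}

/-- Restriction of a partition to a block of a coarser partition (junk value otherwise). -/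
noncomputable def restr (κ : Finpartition s) (B : Finset α) : Finpartition B :=
  if hB : (κ.parts.filter (· ⊆ B)).sup id = B then
    { parts := κ.parts.filter (· ⊆ B)
      supIndep := κ.supIndep.subset (filter_subset _ _)
      sup_parts := hB
      bot_notMem := fun hb => κ.bot_notMem (mem_of_mem_filter _ hb) }
  else ⊥

theorem restr_parts {κ z : Finpartition s} (hκz : κ ≤ z) {B : Finset α} (hB : B ∈ z.parts) :
    (restr κ B).parts = κ.parts.filter (· ⊆ B) := by
  have hsup : (κ.parts.filter (· ⊆ B)).sup id = B := by
    apply le_antisymm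
    · rw [Finset.sup_le_iff]
      intro C hC
      exact (mem_filter.1 hC).2
    · intro a haB
      have has : a ∈ s := z.le hB haB
      obtain ⟨C, hC, haC⟩ := κ.exists_mem has
      obtain ⟨B', hB', hCB'⟩ := hκz hC
      have : B' = B := z.eq_of_mem_parts hB' hB (hCB' haC) haB
      have hCm : C ∈ κ.parts.filter (· ⊆ B) := mem_filter.2 ⟨hC, this ▸ hCB'⟩
      exact Finset.le_sup (f := id) hCm haC
  rw [restr, dif_pos hsup]

theorem biUnion_filter_parts {κ z : Finpartition s} (hκz : κ ≤ z) :
    z.parts.biUnion (fun B => κ.parts.filter (· ⊆ B)) = κ.parts := by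
  ext C
  simp only [mem_biUnion, mem_filter]
  constructor
  · rintro ⟨B, _, hC, _⟩; exact hC
  · intro hC
    obtain ⟨B, hB, hCB⟩ := hκz hC
    exact ⟨B, hB, hC, hCB⟩

theorem pairwiseDisjoint_filter_parts (κ z : Finpartition s) :
    (↑z.parts : Set (Finset α)).PairwiseDisjoint
      (fun B => κ.parts.filter (· ⊆ B)) := by
  intro B hB B' hB' hBB'
  rw [mem_coe] at hB hB'
  apply Finset.disjoint_left.2
  intro C hC hC'
  have h1 := (mem_filter.1 hC).2
  have h2 := (mem_filter.1 hC').2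
  have : C ⊆ B ∩ B' := subset_inter h1 h2
  have hd : Disjoint B B' := z.disjoint hB hB' hBB'
  have hCe : C = ∅ := by
    rw [Finset.disjoint_iff_inter_eq_empty.1 hd] at this
    exact subset_empty.1 this
  exact κ.ne_bot (mem_filter.1 hC).1 (by simpa using hCe)

/-- the bind of a family of partitions of the parts of `z` -/
noncomputable def zbind (z : Finpartition s)
    (q : ∀ B : {x // x ∈ z.parts}, Finpartition B.1) : Finpartition s :=
  z.bind fun B hB => q ⟨B, hB⟩

theorem zbind_le (z : Finpartition s) (q : ∀ B : {x // x ∈ z.parts}, Finpartition B.1) :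
    zbind z q ≤ z := by
  intro C hC
  rw [zbind, Finpartition.mem_bind] at hC
  obtain ⟨A, hA, hCA⟩ := hC
  exact ⟨A, hA, (q ⟨A, hA⟩).le hCA⟩

theorem restr_zbind (z : Finpartition s) (q : ∀ B : {x // x ∈ z.parts}, Finpartition B.1)
    (B : {x // x ∈ z.parts}) : restr (zbind z q) B.1 = q B := by
  apply Finpartition.ext
  rw [restr_parts (zbind_le z q) B.2]
  ext C
  simp only [mem_filter, zbind, Finpartition.mem_bind]
  constructor
  · rintro ⟨⟨A, hA, hCA⟩, hCB⟩
    have hCne : C.Nonempty := (q ⟨A, hA⟩).nonempty_of_mem_parts hCA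
    obtain ⟨a, ha⟩ := hCne
    have hAB : A = B.1 := z.eq_of_mem_parts hA B.2 ((q ⟨A, hA⟩).le hCA ha) (hCB ha)
    cases B with
    | mk B hB => subst hAB; exact hCA
  · intro hC
    exact ⟨⟨B.1, B.2, hC⟩, (q B).le hC⟩

theorem zbind_restr {κ z : Finpartition s} (hκz : κ ≤ z) :
    zbind z (fun B => restr κ B.1) = κ := by
  apply Finpartition.ext
  ext C
  rw [zbind, Finpartition.mem_bind]
  constructor
  · rintro ⟨A, hA, hCA⟩
    rw [restr_parts hκz hA] at hCA
    exact (mem_filter.1 hCA).1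
  · intro hC
    obtain ⟨B, hB, hCB⟩ := hκz hC
    exact ⟨B, hB, by rw [restr_parts hκz hB]; exact mem_filter.2 ⟨hC, hCB⟩⟩

theorem attach_eq_univ {γ : Type*} [DecidableEq γ] (u : Finset γ) :
    u.attach = (Finset.univ : Finset {x // x ∈ u}) := by
  ext x; simp

/-- factorization of a product of sums over partitions of the blocks -/
theorem prod_sum_parts (z : Finpartition s) (Φ : (B : Finset α) → Finpartition B → ℝ) :
    ∏ B ∈ z.parts.attach, (∑ p : Finpartition (B.1 : Finset α), Φ B.1 p)
      = ∑ κ ∈ univ.filter (· ≤ z), ∏ B ∈ z.parts.attach, Φ B.1 (restr κ B.1) := by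
  rw [attach_eq_univ]
  rw [Finset.prod_univ_sum (fun B : {x // x ∈ z.parts} => (univ : Finset (Finpartition B.1)))
    (fun B p => Φ B.1 p)]
  have hpi : Fintype.piFinset (fun B : {x // x ∈ z.parts} => (univ : Finset (Finpartition B.1)))
      = univ := by ext q; simp
  rw [hpi]
  refine Finset.sum_nbij' (zbind z) (fun κ B => restr κ B.1) ?_ ?_ ?_ ?_ ?_
  · intro q _; exact mem_filter.2 ⟨mem_univ _, zbind_le z q⟩
  · intro κ _; exact mem_univ _
  · intro q _
    funext B
    exact restr_zbind z q B
  · intro κ hκ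
    exact zbind_restr (mem_filter.1 hκ).2
  · intro q _
    exact Finset.prod_congr rfl fun B _ => by rw [restr_zbind z q B]

end Restr

section Sumall

variable {s : Finset α}

theorem avoid_parts_erase (κ : Finpartition s) {t : Finset α} (ht : t ∈ κ.parts) :
    (κ.avoid t).parts = κ.parts.erase t := by
  ext C
  rw [Finpartition.mem_avoid, mem_erase]
  constructor
  · rintro ⟨d, hd, hdt, rfl⟩
    have hdnet : d ≠ t := by rintro rfl; exact hdt le_rfl
    have hdis : Disjoint d t := κ.disjoint hd ht hdnet
    rw [Finset.sdiff_eq_self_of_disjoint hdis]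
    exact ⟨hdnet, hd⟩
  · rintro ⟨hCt, hC⟩
    have hdis : Disjoint C t := κ.disjoint hC ht hCt
    refine ⟨C, hC, ?_, Finset.sdiff_eq_self_of_disjoint hdis⟩
    intro hle
    exact κ.ne_bot hC (le_bot_iff.1 (hdis le_rfl hle))

theorem f_one : f 1 = 1 := by simp [f]

theorem f_succ_add (m : ℕ) : f (m + 2) + (m + 1) * f (m + 1) = 0 := by
  simp only [f, Nat.add_sub_cancel]
  push_cast [Nat.factorial_succ]
  ring

theorem sumall (s : Finset α) :
    ∑ κ : Finpartition s, ∏ C ∈ κ.parts, f (#C) = if #s ≤ 1 then 1 else 0 := by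
  induction s using Finset.strongInduction with
  | _ s IH =>
  rcases s.eq_empty_or_nonempty with rfl | ⟨a, ha⟩
  · have huniv : (univ : Finset (Finpartition (∅ : Finset α))) = {⊥} := by
      apply Finset.Subset.antisymm
      · intro κ _
        rw [mem_singleton]
        apply Finpartition.ext
        rw [Finpartition.parts_eq_empty_iff.2 Finset.bot_eq_empty.symm, Finpartition.parts_bot]
        simp
      · intro κ _
        exact mem_univ κ
    rw [huniv, Finset.sum_singleton, Finpartition.parts_bot]
    simp
  · -- group by the part containing a
    rw [← Finset.sum_fiberwise_of_maps_to (g := fun κ : Finpartition s => κ.part a)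
      (t := (s.powerset.filter fun t => a ∈ t))
      (fun κ _ => mem_filter.2 ⟨mem_powerset.2 (κ.le (κ.part_mem.2 ha)), κ.mem_part ha⟩)
      (fun κ => ∏ C ∈ κ.parts, f (#C))]
    have inner : ∀ t ∈ s.powerset.filter fun t => a ∈ t,
        ∑ κ ∈ univ.filter (fun κ : Finpartition s => κ.part a = t),
          ∏ C ∈ κ.parts, f (#C)
        = f (#t) * (if #(s \ t) ≤ 1 then 1 else 0) := by
      intro t htmem
      rw [mem_filter, mem_powerset] at htmem
      obtain ⟨hts, hat⟩ := htmem
      have htne : t ≠ ⊥ := by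
        rw [Finset.bot_eq_empty]
        exact Finset.ne_empty_of_mem hat
      have hdis : Disjoint (s \ t) t := Finset.sdiff_disjoint
      have hsup : (s \ t) ⊔ t = s := by
        rw [Finset.sup_eq_union, Finset.sdiff_union_of_subset hts]
      have htnotin : ∀ κ' : Finpartition (s \ t), t ∉ κ'.parts := by
        intro κ' hmem
        have := κ'.le hmem hat
        exact (Finset.mem_sdiff.1 this).2 hat
      rw [show ∑ κ ∈ univ.filter (fun κ : Finpartition s => κ.part a = t),
            ∏ C ∈ κ.parts, f (#C)
          = ∑ κ' : Finpartition (s \ t), f (#t) * ∏ C ∈ κ'.parts, f (#C) from ?_]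
      · rw [← Finset.mul_sum, IH (s \ t)
          (Finset.sdiff_ssubset hts ⟨a, hat⟩)]
      · symm
        refine Finset.sum_nbij' (fun κ' => κ'.extend htne hdis hsup) (fun κ => κ.avoid t)
          ?_ ?_ ?_ ?_ ?_
        · intro κ' _
          refine mem_filter.2 ⟨mem_univ _, ?_⟩
          exact Finpartition.part_eq_of_mem _ (mem_insert_self t _) hat
        · intro κ _; exact mem_univ _
        · intro κ' _
          apply Finpartition.ext
          rw [avoid_parts_erase _ (mem_insert_self t _), Finpartition.extend_parts,
            Finset.erase_insert (htnotin κ')]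
        · intro κ hκ
          have hpart : κ.part a = t := (mem_filter.1 hκ).2
          have htp : t ∈ κ.parts := hpart ▸ κ.part_mem.2 ha
          apply Finpartition.ext
          rw [Finpartition.extend_parts, avoid_parts_erase _ htp, Finset.insert_erase htp]
        · intro κ' _
          rw [Finpartition.extend_parts, Finset.prod_insert (htnotin κ')]
    rw [Finset.sum_congr rfl inner]
    have hform : ∀ t ∈ s.powerset.filter fun t => a ∈ t,
        f (#t) * (if #(s \ t) ≤ 1 then 1 else 0)
          = if #(s \ t) ≤ 1 then f (#t) else 0 := by
      intro t _
      split <;> ring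
    rw [Finset.sum_congr rfl hform, Finset.sum_ite, Finset.sum_const_zero, add_zero]
    have hset : (s.powerset.filter fun t => a ∈ t).filter (fun t => #(s \ t) ≤ 1)
        = insert s ((s.erase a).image fun x => s.erase x) := by
      ext t
      simp only [mem_filter, mem_powerset, mem_insert, mem_image, mem_erase]
      constructor
      · rintro ⟨⟨hts, hat⟩, hcard⟩
        rcases (s \ t).eq_empty_or_nonempty with he | ⟨x, hx⟩
        · left
          exact (Finset.Subset.antisymm hts (Finset.sdiff_eq_empty_iff_subset.1 he)).symm ▸ rfl
        · right
          have hsing : s \ t = {x} := by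
            apply Finset.eq_singleton_iff_unique_mem.2
            exact ⟨hx, fun y hy => Finset.card_le_one.1 hcard y hy x hx⟩
          have hxs : x ∈ s := (Finset.mem_sdiff.1 hx).1
          have hxa : x ≠ a := fun hxe => (Finset.mem_sdiff.1 hx).2 (hxe ▸ hat)
          refine ⟨x, ⟨hxa, hxs⟩, ?_⟩
          rw [Finset.erase_eq, ← hsing, Finset.sdiff_sdiff_eq_self hts]
      · rintro (rfl | ⟨x, ⟨hxa, hxs⟩, rfl⟩)
        · simp [ha]
        · refine ⟨⟨Finset.erase_subset _ _, Finset.mem_erase.2 ⟨fun h => hxa h.symm, ha⟩⟩, ?_⟩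
          rw [Finset.erase_eq, Finset.sdiff_sdiff_eq_self (Finset.singleton_subset_iff.2 hxs)]
          simp
    rw [hset]
    have hsnotin : s ∉ (s.erase a).image fun x => s.erase x := by
      rw [mem_image]
      rintro ⟨x, hx, hxe⟩
      have hxs : x ∈ s := (Finset.mem_erase.1 hx).2
      rw [← hxe] at hxs
      exact Finset.notMem_erase x s hxs
    rw [Finset.sum_insert hsnotin]
    have himg : ∑ t ∈ (s.erase a).image (fun x => s.erase x), f (#t)
        = ∑ x ∈ s.erase a, f (#(s.erase x)) := by
      apply Finset.sum_image
      intro x hx y hy hxy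
      by_contra hne
      have hxs : x ∈ s := (Finset.mem_erase.1 hx).2
      have : x ∈ s.erase y := Finset.mem_erase.2 ⟨hne, hxs⟩
      rw [← show s.erase x = s.erase y from hxy] at this
      exact Finset.notMem_erase x s this
    rw [himg]
    have hconst : ∑ x ∈ s.erase a, f (#(s.erase x)) = (#s - 1 : ℕ) * f (#s - 1) := by
      rw [Finset.sum_congr rfl fun x hx =>
        by rw [Finset.card_erase_of_mem (Finset.mem_erase.1 hx).2]]
      rw [Finset.sum_const, Finset.card_erase_of_mem ha, nsmul_eq_mul]
    rw [hconst]
    obtain ⟨m, hm⟩ : ∃ m, #s = m + 1 :=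
      ⟨#s - 1, (Nat.succ_pred_eq_of_pos (Finset.card_pos.2 ⟨a, ha⟩)).symm⟩
    rw [hm]
    rcases Nat.eq_zero_or_pos m with rfl | hmpos
    · simp [f_one]
    · obtain ⟨k, rfl⟩ : ∃ k, m = k + 1 := ⟨m - 1, (Nat.succ_pred_eq_of_pos hmpos).symm⟩
      have : k + 1 + 1 = k + 2 := by ring
      rw [this]
      rw [if_neg (by omega)]
      have := f_succ_add k
      push_cast
      push_cast at this
      linarith

theorem mobius {s : Finset α} (z : Finpartition s) :
    ∑ κ ∈ univ.filter (· ≤ z), ∏ C ∈ κ.parts, f (#C) = if z = ⊥ then 1 else 0 := by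
  have step : ∀ κ ∈ univ.filter (· ≤ z), ∏ C ∈ κ.parts, f (#C)
      = ∏ B ∈ z.parts.attach, ∏ C ∈ (restr κ B.1).parts, f (#C) := by
    intro κ hκ
    have hκz := (mem_filter.1 hκ).2
    have e1 : ∏ B ∈ z.parts, ∏ C ∈ (restr κ B).parts, f (#C)
        = ∏ B ∈ z.parts, ∏ C ∈ κ.parts.filter (· ⊆ B), f (#C) :=
      Finset.prod_congr rfl fun B hB => by rw [restr_parts hκz hB]
    rw [Finset.prod_attach z.parts (fun B => ∏ C ∈ (restr κ B).parts, f (#C)), e1,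
      ← Finset.prod_biUnion (pairwiseDisjoint_filter_parts κ z), biUnion_filter_parts hκz]
  rw [Finset.sum_congr rfl step, ← prod_sum_parts z (fun B p => ∏ C ∈ p.parts, f (#C))]
  have hblock : ∀ B ∈ z.parts.attach,
      (∑ p : Finpartition (B.1 : Finset α), ∏ C ∈ p.parts, f (#C))
        = if #B.1 ≤ 1 then (1 : ℝ) else 0 := fun B _ => sumall B.1
  rw [Finset.prod_congr rfl hblock]
  by_cases hz : z = ⊥
  · subst hz
    rw [if_pos rfl]
    apply Finset.prod_eq_one
    intro B _
    have hB : B.1 ∈ (⊥ : Finpartition s).parts := B.2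
    rw [Finpartition.mem_bot_iff] at hB
    obtain ⟨b, _, hb⟩ := hB
    rw [if_pos (by rw [← hb]; simp)]
  · rw [if_neg hz]
    have hex : ∃ B ∈ z.parts, ¬(#B ≤ 1) := by
      by_contra hall
      push_neg at hall
      apply hz
      have hle : z ≤ ⊥ := by
        intro B hB
        have h1 : #B = 1 := le_antisymm (hall B hB)
          (Finset.one_le_card.2 (z.nonempty_of_mem_parts hB))
        obtain ⟨b, hb⟩ := Finset.card_eq_one.1 h1
        refine ⟨B, ?_, le_rfl⟩
        rw [Finpartition.mem_bot_iff]
        exact ⟨b, z.le hB (hb ▸ mem_singleton_self b), hb.symm⟩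
      exact le_bot_iff.1 hle
    obtain ⟨B, hB, hBc⟩ := hex
    refine Finset.prod_eq_zero (i := (⟨B, hB⟩ : {x // x ∈ z.parts})) (mem_attach _ _) ?_
    rw [if_neg hBc]

end Sumall

section Weisner

variable {s : Finset α}

/-- The join of two finpartitions, defined as the infimum of all common coarsenings. -/
noncomputable def pjoin (p q : Finpartition s) : Finpartition s :=
  (univ.filter fun y => p ≤ y ∧ q ≤ y).inf'
    ⟨⊤, mem_filter.2 ⟨mem_univ _, le_top, le_top⟩⟩ id

theorem le_pjoin_left (p q : Finpartition s) : p ≤ pjoin p q :=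
  Finset.le_inf' _ _ fun y hy => (mem_filter.1 hy).2.1

theorem le_pjoin_right (p q : Finpartition s) : q ≤ pjoin p q :=
  Finset.le_inf' _ _ fun y hy => (mem_filter.1 hy).2.2

theorem pjoin_le {p q y : Finpartition s} (hp : p ≤ y) (hq : q ≤ y) : pjoin p q ≤ y :=
  Finset.inf'_le _ (mem_filter.2 ⟨mem_univ _, hp, hq⟩)

theorem cond_iff_pjoin (p r : Finpartition s) :
    (∀ τ : Finpartition s, p ≤ τ → r ≤ τ → τ = ⊤) ↔ pjoin p r = ⊤ := by
  constructor
  · intro hcond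
    exact hcond _ (le_pjoin_left p r) (le_pjoin_right p r)
  · intro hjoin τ hpτ hrτ
    exact le_antisymm le_top (hjoin ▸ pjoin_le hpτ hrτ)

theorem pjoin_bot_right (p : Finpartition s) : pjoin p ⊥ = p :=
  le_antisymm (pjoin_le le_rfl bot_le) (le_pjoin_left p ⊥)

theorem weisner {r : Finpartition s} (hr : r ≠ ⊥) :
    ∀ z : Finpartition s, r ≤ z →
      ∑ κ ∈ univ.filter (fun κ => pjoin κ r = z), ∏ C ∈ κ.parts, f (#C) = 0 := by
  have : WellFoundedLT (Finpartition s) := Finite.to_wellFoundedLT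
  intro z
  induction z using WellFoundedLT.induction with
  | ind z IH =>
  intro hrz
  have hzbot : z ≠ ⊥ := fun h => hr (le_bot_iff.1 (h ▸ hrz))
  have key : ∑ κ ∈ univ.filter (· ≤ z), ∏ C ∈ κ.parts, f (#C) = 0 := by
    rw [mobius z, if_neg hzbot]
  have fiber : ∑ y ∈ univ.filter (fun y => r ≤ y ∧ y ≤ z),
      ∑ κ ∈ (univ.filter (· ≤ z)).filter (fun κ => pjoin κ r = y),
        ∏ C ∈ κ.parts, f (#C)
      = ∑ κ ∈ univ.filter (· ≤ z), ∏ C ∈ κ.parts, f (#C) := by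
    apply Finset.sum_fiberwise_of_maps_to
    intro κ hκ
    have hκz := (mem_filter.1 hκ).2
    exact mem_filter.2 ⟨mem_univ _, le_trans (le_pjoin_right κ r) le_rfl, pjoin_le hκz hrz⟩
  have inner_eq : ∀ y ∈ univ.filter (fun y => r ≤ y ∧ y ≤ z),
      (univ.filter (· ≤ z)).filter (fun κ => pjoin κ r = y)
        = univ.filter (fun κ => pjoin κ r = y) := by
    intro y hy
    have hyz := (mem_filter.1 hy).2.2
    ext κ
    simp only [mem_filter, mem_univ, true_and]
    constructor
    · rintro ⟨_, hj⟩; exact hj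
    · intro hj
      exact ⟨le_trans (le_pjoin_left κ r) (hj ▸ hyz), hj⟩
  rw [Finset.sum_congr rfl fun y hy => by rw [inner_eq y hy]] at fiber
  rw [key] at fiber
  have hzmem : z ∈ univ.filter (fun y => r ≤ y ∧ y ≤ z) :=
    mem_filter.2 ⟨mem_univ _, hrz, le_rfl⟩
  have := Finset.sum_eq_single_of_mem z hzmem (fun y hy hyz => by
    have h1 := (mem_filter.1 hy).2
    exact IH y (lt_of_le_of_ne h1.2 hyz) h1.1)
  rw [fiber] at this
  exact this.symm

end Weisner

section Inner

variable {s : Finset α}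

theorem inner_sum (hs : s.Nonempty) (ρ κ : Finpartition s) :
    ∑ π ∈ univ.filter (fun π : Finpartition s =>
        κ ≤ π ∧ ∀ τ : Finpartition s, π ≤ τ → ρ ≤ τ → τ = ⊤),
      ∏ B ∈ π.parts, f (#(κ.parts.filter (· ⊆ B)))
    = if ρ ≤ κ then f (#κ.parts) else 0 := by
  have h : Good κ.parts (id : Finset α → Finset α) s :=
    { disj := fun b hb b' hb' hne => κ.disjoint hb hb' hne
      ne := fun b hb => κ.nonempty_of_mem_parts hb
      cover := κ.biUnion_parts }
  have hT : κ.parts.Nonempty := κ.parts_nonempty (by simpa using hs.ne_empty)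
  have hpush_bot : Good.push h (⊥ : Finpartition κ.parts) = κ :=
    Finpartition.ext (by rw [Good.push_bot h, Finset.image_id])
  have hsat : ∀ τ : Finpartition s, Good.Sat (T := κ.parts) (F := id) τ ↔ κ ≤ τ := by
    intro τ
    rw [Good.sat_iff h, hpush_bot]
  set r' := pjoin κ ρ with hr'
  have hSatr' : Good.Sat (T := κ.parts) (F := id) r' := (hsat r').2 (le_pjoin_left κ ρ)
  set r := Good.pull h r' with hrdef
  have hpushr : Good.push h r = r' := Good.push_pull h hSatr'
  have hrbot : r = ⊥ ↔ ρ ≤ κ := by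
    constructor
    · intro hb
      have : r' = κ := by rw [← hpushr, hb, hpush_bot]
      rw [← this]
      exact le_pjoin_right κ ρ
    · intro hρκ
      have hr'κ : r' = κ := le_antisymm (pjoin_le le_rfl hρκ) (le_pjoin_left κ ρ)
      apply Good.push_inj h
      rw [hpushr, hpush_bot, hr'κ]
  -- weight transfer
  have hinj : ∀ P ∈ univ.filter (fun _ : Finpartition κ.parts => True), True := fun _ _ => trivial
  have wt : ∀ l : Finpartition κ.parts,
      ∏ B ∈ (Good.push h l).parts, f (#(κ.parts.filter (· ⊆ B)))
        = ∏ P ∈ l.parts, f (#P) := by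
    intro l
    rw [Good.push_parts]
    rw [Finset.prod_image ?_]
    · refine Finset.prod_congr rfl fun P hP => ?_
      have := Good.filter_push h hP
      simp only [id_eq] at this
      rw [this]
    · intro P hP Q hQ hPQ
      have e1 := Good.filter_push h hP
      have e2 := Good.filter_push h hQ
      rw [← e1, ← e2, show P.biUnion id = Q.biUnion id from hPQ]
  -- cond transfer
  have condtrans : ∀ l : Finpartition κ.parts,
      (∀ τ : Finpartition s, Good.push h l ≤ τ → ρ ≤ τ → τ = ⊤) ↔ pjoin l r = ⊤ := by
    intro l
    rw [← cond_iff_pjoin]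
    constructor
    · intro hcond l' hll' hrl'
      have h1 : Good.push h l ≤ Good.push h l' := (Good.push_le_push_iff h).2 hll'
      have h2 : ρ ≤ Good.push h l' := by
        refine le_trans (le_pjoin_right κ ρ) ?_
        rw [← hr', ← hpushr]
        exact (Good.push_le_push_iff h).2 hrl'
      have h3 := hcond (Good.push h l') h1 h2
      apply Good.push_inj h
      rw [h3, Good.push_top h hT]
    · intro hcond τ hπτ hρτ
      have hκle : κ ≤ Good.push h l := by
        have h0 := (Good.push_le_push_iff h).2 (bot_le (a := l))
        rwa [hpush_bot] at h0
      have hκτ : κ ≤ τ := le_trans hκle hπτ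
      have hSτ : Good.Sat (T := κ.parts) (F := id) τ := (hsat τ).2 hκτ
      have hpl' : Good.push h (Good.pull h τ) = τ := Good.push_pull h hSτ
      have hll' : l ≤ Good.pull h τ := by
        rw [← Good.push_le_push_iff h, hpl']
        exact hπτ
      have hrl' : r ≤ Good.pull h τ := by
        rw [← Good.push_le_push_iff h, hpl', hpushr]
        exact pjoin_le hκτ hρτ
      have : Good.pull h τ = ⊤ := hcond _ hll' hrl'
      rw [← hpl', this, Good.push_top h hT]
  -- now transfer the sum
  have hle_push : ∀ l : Finpartition κ.parts, κ ≤ Good.push h l := by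
    intro l
    have h0 := (Good.push_le_push_iff h).2 (bot_le (a := l))
    rwa [hpush_bot] at h0
  have step1 : ∑ π ∈ univ.filter (fun π : Finpartition s =>
        κ ≤ π ∧ ∀ τ : Finpartition s, π ≤ τ → ρ ≤ τ → τ = ⊤),
      ∏ B ∈ π.parts, f (#(κ.parts.filter (· ⊆ B)))
      = ∑ π ∈ (univ : Finset (Finpartition s)),
          if (κ ≤ π ∧ ∀ τ : Finpartition s, π ≤ τ → ρ ≤ τ → τ = ⊤) then
            ∏ B ∈ π.parts, f (#(κ.parts.filter (· ⊆ B))) else 0 :=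
    Finset.sum_filter _ _
  have step2 : ∑ π ∈ (univ : Finset (Finpartition s)),
          (if (κ ≤ π ∧ ∀ τ : Finpartition s, π ≤ τ → ρ ≤ τ → τ = ⊤) then
            ∏ B ∈ π.parts, f (#(κ.parts.filter (· ⊆ B))) else 0)
      = ∑ π ∈ univ.filter (fun π => Good.Sat (T := κ.parts) (F := id) π),
          (if (κ ≤ π ∧ ∀ τ : Finpartition s, π ≤ τ → ρ ≤ τ → τ = ⊤) then
            ∏ B ∈ π.parts, f (#(κ.parts.filter (· ⊆ B))) else 0) := by
    symm
    apply Finset.sum_subset (filter_subset _ _)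
    intro π _ hπ
    rw [if_neg]
    rintro ⟨hκπ, _⟩
    exact (mem_filter.not.1 hπ) ⟨mem_univ _, (hsat π).2 hκπ⟩
  have step3 := (Good.sum_push h (fun π =>
      if (κ ≤ π ∧ ∀ τ : Finpartition s, π ≤ τ → ρ ≤ τ → τ = ⊤) then
        ∏ B ∈ π.parts, f (#(κ.parts.filter (· ⊆ B))) else 0)).symm
  have step4 : ∑ l : Finpartition κ.parts,
      (if (κ ≤ Good.push h l ∧
            ∀ τ : Finpartition s, Good.push h l ≤ τ → ρ ≤ τ → τ = ⊤) then
        ∏ B ∈ (Good.push h l).parts, f (#(κ.parts.filter (· ⊆ B))) else 0)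
      = ∑ l : Finpartition κ.parts,
          (if pjoin l r = ⊤ then ∏ P ∈ l.parts, f (#P) else 0) := by
    refine Finset.sum_congr rfl fun l _ => ?_
    rw [wt l]
    by_cases hc : pjoin l r = ⊤
    · rw [if_pos hc, if_pos ⟨hle_push l, (condtrans l).2 hc⟩]
    · rw [if_neg hc, if_neg]
      rintro ⟨_, hcond⟩
      exact hc ((condtrans l).1 hcond)
  have step5 : ∑ l : Finpartition κ.parts,
      (if pjoin l r = ⊤ then ∏ P ∈ l.parts, f (#P) else 0)
      = ∑ l ∈ univ.filter (fun l : Finpartition κ.parts => pjoin l r = ⊤),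
          ∏ P ∈ l.parts, f (#P) := (Finset.sum_filter _ _).symm
  rw [step1, step2, step3, step4, step5]
  by_cases hρκ : ρ ≤ κ
  · rw [if_pos hρκ]
    have hrb : r = ⊥ := hrbot.2 hρκ
    have hfilter : univ.filter (fun l : Finpartition κ.parts => pjoin l r = ⊤)
        = {⊤} := by
      ext l
      simp only [mem_filter, mem_univ, true_and, mem_singleton, hrb, pjoin_bot_right]
    rw [hfilter, Finset.sum_singleton, Good.parts_top' hT, Finset.prod_singleton]
  · rw [if_neg hρκ]
    have hrne : r ≠ ⊥ := fun hb => hρκ (hrbot.1 hb)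
    exact weisner hrne ⊤ le_top

theorem expand_prod {s : Finset α} (π : Finpartition s) (g : Finset α → ℝ) :
    ∏ B ∈ π.parts, (∑ p : Finpartition B, f (#p.parts) * ∏ C ∈ p.parts, g C)
      = ∑ κ ∈ univ.filter (· ≤ π),
          (∏ B ∈ π.parts, f (#(κ.parts.filter (· ⊆ B)))) * ∏ C ∈ κ.parts, g C := by
  rw [← Finset.prod_attach π.parts
    (fun B => ∑ p : Finpartition B, f (#p.parts) * ∏ C ∈ p.parts, g C)]
  rw [prod_sum_parts π (fun B p => f (#p.parts) * ∏ C ∈ p.parts, g C)]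
  refine Finset.sum_congr rfl fun κ hκ => ?_
  have hκπ : κ ≤ π := (mem_filter.1 hκ).2
  rw [Finset.prod_mul_distrib]
  congr 1
  · rw [Finset.prod_attach π.parts (fun B => f (#(restr κ B).parts))]
    refine Finset.prod_congr rfl fun B hB => ?_
    rw [restr_parts hκπ hB]
  · rw [Finset.prod_attach π.parts (fun B => ∏ C ∈ (restr κ B).parts, g C)]
    rw [Finset.prod_congr rfl fun B hB => by rw [restr_parts hκπ hB]]
    rw [← Finset.prod_biUnion (pairwiseDisjoint_filter_parts κ π), biUnion_filter_parts hκπ]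

end Inner

section Main

open MeasureTheory

theorem main_general {Ω : Type*} [MeasurableSpace Ω] (μ : Measure Ω) {N n : ℕ}
    (X : Fin N → Ω → ℝ) (F : Fin n → Finset (Fin N))
    (hgood : Good (Finset.univ : Finset (Fin n)) F (Finset.univ : Finset (Fin N)))
    (hN : (Finset.univ : Finset (Fin N)).Nonempty)
    (ρ : Finpartition (Finset.univ : Finset (Fin N)))
    (hρparts : ρ.parts = Finset.univ.image F) :
    jointCumulant μ (fun s ω => ∏ j ∈ F s, X j ω) =
      ∑ π ∈ Finset.univ.filter
          (fun π : Finpartition (Finset.univ : Finset (Fin N)) =>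
            ∀ σ : Finpartition (Finset.univ : Finset (Fin N)), π ≤ σ → ρ ≤ σ → σ = ⊤),
        ∏ B ∈ π.parts, jointCumulantOn μ X B := by
  set g : Finset (Fin N) → ℝ := fun C => ∫ ω, ∏ i ∈ C, X i ω ∂μ with hg
  have hpushbot : Good.push hgood (⊥ : Finpartition (univ : Finset (Fin n))) = ρ :=
    Finpartition.ext (by rw [Good.push_bot hgood, hρparts])
  -- LHS
  have hL1 : jointCumulant μ (fun s ω => ∏ j ∈ F s, X j ω)
      = ∑ l : Finpartition (univ : Finset (Fin n)),
          f (#l.parts) * ∏ P ∈ l.parts, g (P.biUnion F) := by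
    rw [jointCumulant, jointCumulantOn]
    refine Finset.sum_congr rfl fun l _ => ?_
    have hpp : ∀ B ∈ l.parts, (∫ ω, (∏ s ∈ B, ∏ j ∈ F s, X j ω) ∂μ)
        = g (B.biUnion F) := by
      intro B _
      rw [hg]
      congr 1
      funext ω
      rw [Finset.prod_biUnion]
      intro x _ y _ hxy
      exact hgood.disj x (mem_univ _) y (mem_univ _) hxy
    rw [Finset.prod_congr rfl hpp, f]
  have hL2 : ∑ l : Finpartition (univ : Finset (Fin n)),
          f (#l.parts) * ∏ P ∈ l.parts, g (P.biUnion F)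
      = ∑ κ ∈ univ.filter (fun κ : Finpartition (univ : Finset (Fin N)) => ρ ≤ κ),
          f (#κ.parts) * ∏ C ∈ κ.parts, g C := by
    have hsp := Good.sum_push hgood
      (fun κ : Finpartition (univ : Finset (Fin N)) => f (#κ.parts) * ∏ C ∈ κ.parts, g C)
    rw [Finset.sum_congr rfl (fun l _ => by
      rw [Good.card_push_parts hgood l, Good.prod_push_parts hgood l g])] at hsp
    rw [hsp]
    apply Finset.sum_congr
    · ext κ
      simp only [mem_filter, mem_univ, true_and]
      rw [Good.sat_iff hgood, hpushbot]
    · intro κ _; rfl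
  -- RHS
  have hR1 : ∀ B : Finset (Fin N), jointCumulantOn μ X B
      = ∑ p : Finpartition B, f (#p.parts) * ∏ C ∈ p.parts, g C := by
    intro B
    rw [jointCumulantOn]
    refine Finset.sum_congr rfl fun p _ => ?_
    rw [f, hg]
  have hR2 : ∀ π : Finpartition (univ : Finset (Fin N)),
      ∏ B ∈ π.parts, jointCumulantOn μ X B
        = ∑ κ ∈ univ.filter (· ≤ π),
            (∏ B ∈ π.parts, f (#(κ.parts.filter (· ⊆ B)))) * ∏ C ∈ κ.parts, g C := by
    intro π
    rw [Finset.prod_congr rfl (fun B _ => hR1 B), expand_prod π g]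
  rw [hL1, hL2, Finset.sum_congr rfl (fun π _ => hR2 π)]
  -- swap sums
  have e1 : ∀ π : Finpartition (univ : Finset (Fin N)),
      (if (∀ σ : Finpartition (univ : Finset (Fin N)), π ≤ σ → ρ ≤ σ → σ = ⊤) then
          (∑ κ ∈ univ.filter (· ≤ π),
            (∏ B ∈ π.parts, f (#(κ.parts.filter (· ⊆ B)))) * ∏ C ∈ κ.parts, g C) else 0)
      = ∑ κ : Finpartition (univ : Finset (Fin N)),
          (if (κ ≤ π ∧ ∀ σ : Finpartition (univ : Finset (Fin N)), π ≤ σ → ρ ≤ σ → σ = ⊤)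
            then (∏ B ∈ π.parts, f (#(κ.parts.filter (· ⊆ B)))) else 0) * ∏ C ∈ κ.parts, g C := by
    intro π
    by_cases hcp : ∀ σ : Finpartition (univ : Finset (Fin N)), π ≤ σ → ρ ≤ σ → σ = ⊤
    · rw [if_pos hcp, Finset.sum_filter]
      refine Finset.sum_congr rfl fun κ _ => ?_
      by_cases hk : κ ≤ π
      · rw [if_pos hk, if_pos ⟨hk, hcp⟩]
      · rw [if_neg hk, if_neg (fun hh => hk hh.1), zero_mul]
    · rw [if_neg hcp]
      symm
      apply Finset.sum_eq_zero
      intro κ _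
      rw [if_neg (fun hh => hcp hh.2), zero_mul]
  have e2 : ∀ κ : Finpartition (univ : Finset (Fin N)),
      ∑ π : Finpartition (univ : Finset (Fin N)),
        (if (κ ≤ π ∧ ∀ σ : Finpartition (univ : Finset (Fin N)), π ≤ σ → ρ ≤ σ → σ = ⊤)
          then (∏ B ∈ π.parts, f (#(κ.parts.filter (· ⊆ B)))) else 0) * ∏ C ∈ κ.parts, g C
      = (if ρ ≤ κ then f (#κ.parts) else 0) * ∏ C ∈ κ.parts, g C := by
    intro κ
    rw [← Finset.sum_mul]
    congr 1
    rw [← Finset.sum_filter]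
    exact inner_sum hN ρ κ
  conv_lhs => rw [Finset.sum_filter]
  conv_rhs => rw [Finset.sum_filter, Finset.sum_congr rfl fun π _ => e1 π, Finset.sum_comm,
    Finset.sum_congr rfl fun κ _ => e2 κ]
  refine Finset.sum_congr rfl fun κ _ => ?_
  by_cases hk : ρ ≤ κ
  · rw [if_pos hk, if_pos hk]
  · rw [if_neg hk, if_neg hk, zero_mul]

end Main

end LS


/-- Leonov–Shiryaev: let `{0,…,N-1}` be divided into `n` consecutive
intervals `ρ_s = {j : c s ≤ j < c (s+1)}` given by strictly monotone boundaries `c`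
with `c 0 = 0`, `c n = N`. For bounded random variables `X₀,…,X_{N-1}`, the cumulant of
the products over the intervals equals the sum of `k_π(X₀,…,X_{N-1})` over all set
partitions `π` of `{0,…,N-1}` whose join with the interval partition `ρ` is the
one-block partition (equivalently: every common upper bound of `π` and `ρ` is `⊤`). -/
theorem leonov_shiryaev_cumulants_of_products {Ω : Type*} [MeasurableSpace Ω]
    (μ : Measure Ω) [IsProbabilityMeasure μ] {N n : ℕ}
    (X : Fin N → Ω → ℝ)
    (hXm : ∀ i, Measurable (X i)) (hXb : ∀ i, ∃ C, ∀ ω, |X i ω| ≤ C)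
    (c : Fin (n + 1) → ℕ) (hc : StrictMono c) (hc0 : c 0 = 0) (hcN : c (Fin.last n) = N)
    (ρ : Finpartition (Finset.univ : Finset (Fin N)))
    (hρ : ρ.parts = Finset.image
      (fun s : Fin n => Finset.univ.filter
        (fun j : Fin N => c s.castSucc ≤ (j : ℕ) ∧ (j : ℕ) < c s.succ)) Finset.univ) :
    jointCumulant μ (fun s : Fin n => fun ω =>
        ∏ j ∈ Finset.univ.filter
          (fun j : Fin N => c s.castSucc ≤ (j : ℕ) ∧ (j : ℕ) < c s.succ), X j ω) =
      ∑ π ∈ Finset.univ.filter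
          (fun π : Finpartition (Finset.univ : Finset (Fin N)) =>
            ∀ σ : Finpartition (Finset.univ : Finset (Fin N)), π ≤ σ → ρ ≤ σ → σ = ⊤),
        ∏ B ∈ π.parts, jointCumulantOn μ X B := by
  by_cases hN0 : N = 0
  · subst hN0
    have hn0 : n = 0 := by
      by_contra hn
      have hlt : (0 : Fin (n + 1)) < Fin.last n := by
        rw [Fin.lt_def]
        simp only [Fin.val_zero, Fin.val_last]
        exact Nat.pos_of_ne_zero hn
      have h2 := hc hlt
      rw [hc0, hcN] at h2
      exact Nat.not_lt_zero 0 h2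
    subst hn0
    have huniq : ∀ π π' : Finpartition (Finset.univ : Finset (Fin 0)), π = π' := by
      intro π π'
      apply Finpartition.ext
      have hbot : (Finset.univ : Finset (Fin 0)) = ⊥ := by
        simp [Finset.bot_eq_empty]
      rw [Finpartition.parts_eq_empty_iff.2 hbot, Finpartition.parts_eq_empty_iff.2 hbot]
    have huniv : (Finset.univ : Finset (Finpartition (Finset.univ : Finset (Fin 0)))) = {⊥} := by
      apply Finset.Subset.antisymm
      · intro κ _
        rw [Finset.mem_singleton]
        exact huniq κ ⊥
      · intro κ _
        exact Finset.mem_univ _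
    rw [jointCumulant, jointCumulantOn, huniv, Finset.sum_singleton]
    have hfil : ({⊥} : Finset (Finpartition (Finset.univ : Finset (Fin 0)))).filter
        (fun π => ∀ σ : Finpartition (Finset.univ : Finset (Fin 0)), π ≤ σ → ρ ≤ σ → σ = ⊤)
        = {⊥} := by
      rw [Finset.filter_singleton, if_pos]
      intro σ _ _
      exact huniq σ ⊤
    rw [hfil, Finset.sum_singleton]
    have hparts : (⊥ : Finpartition (Finset.univ : Finset (Fin 0))).parts = ∅ := by
      rw [Finpartition.parts_bot]
      simp
    rw [hparts]
    simp
  · have hNe : (Finset.univ : Finset (Fin N)).Nonempty :=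
      ⟨⟨0, Nat.pos_of_ne_zero hN0⟩, Finset.mem_univ _⟩
    set F : Fin n → Finset (Fin N) := fun s : Fin n => Finset.univ.filter
        (fun j : Fin N => c s.castSucc ≤ (j : ℕ) ∧ (j : ℕ) < c s.succ) with hF
    have hmemF : ∀ (u : Fin n) (j : Fin N),
        j ∈ F u ↔ c u.castSucc ≤ (j : ℕ) ∧ (j : ℕ) < c u.succ := by
      intro u j
      rw [hF]
      simp
    have hkey : ∀ u v : Fin n, u < v → Disjoint (F u) (F v) := by
      intro u v huv
      rw [Finset.disjoint_left]
      intro j hj hj'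
      rw [hmemF] at hj hj'
      have hle : u.succ ≤ v.castSucc := by
        rw [Fin.le_def]
        simp only [Fin.val_succ, Fin.coe_castSucc]
        exact Fin.lt_def.1 huv
      have := hc.monotone hle
      omega
    have hgood : LS.Good (Finset.univ : Finset (Fin n)) F (Finset.univ : Finset (Fin N)) := by
      constructor
      · intro b _ b' _ hne
        rcases lt_or_gt_of_ne hne with hlt | hlt
        · exact hkey b b' hlt
        · exact (hkey b' b hlt).symm
      · intro b _
        have h1 : c b.castSucc < c b.succ := hc (Fin.castSucc_lt_succ (i := b))
        have h2 : c b.succ ≤ N := by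
          rw [← hcN]
          exact hc.monotone (Fin.le_last b.succ)
        have h3 : c b.castSucc < N := lt_of_lt_of_le h1 h2
        refine ⟨⟨c b.castSucc, h3⟩, ?_⟩
        rw [hmemF]
        exact ⟨le_rfl, h1⟩
      · apply Finset.Subset.antisymm
        · exact Finset.subset_univ _
        · intro j _
          have hj : j ∈ ρ.parts.biUnion id := by
            rw [ρ.biUnion_parts]
            exact Finset.mem_univ j
          rw [Finset.mem_biUnion] at hj
          obtain ⟨t, ht, hjt⟩ := hj
          rw [hρ, Finset.mem_image] at ht
          obtain ⟨b, _, rfl⟩ := ht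
          exact Finset.mem_biUnion.2 ⟨b, Finset.mem_univ _, hjt⟩
    have hρparts : ρ.parts = Finset.univ.image F := by
      rw [hρ, hF]
    exact LS.main_general μ X F hgood hNe ρ hρparts
end
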